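/- arXiv:1609.01789 — 2 statements merged into one kernel-verified Lean document; each statement's English description precedes it below -/
import Mathlib

section
/- If S ∈ PIFSpec_d, then {x ∈ ℕ : x + 1 ∈ S} ∈ PIFSpec_d. (Deleting one element: given a structure with d partial injective functions and a distinguished element a, removing a and adding 2d new unary predicates recording which elements mapped to a or were images of a yields a structure interpretable back, so the predecessor-shifted spectrum is realized with the same number of function symbols.) -/
open FirstOrder

/-- The vocabulary with u unary relation symbols and d binary relation symbols
(the latter to be interpreted as graphs of partial injective functions). -/
def pifLang (u d : ℕ) : Language where
  Functions := fun _ => Empty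
  Relations := fun n => match n with
    | 1 => Fin u
    | 2 => Fin d
    | _ => Empty

/-- A binary relation symbol of `pifLang u d`. -/
def pifRel (u d : ℕ) (i : Fin d) : (pifLang u d).Relations 2 := i

/-- Each binary relation is interpreted as the graph of a partial injective
function: it is functional and injective. -/
def IsPIFStructure {u d : ℕ} {M : Type} (St : (pifLang u d).Structure M) : Prop :=
  ∀ i : Fin d,
    (∀ a b c : M, St.RelMap (pifRel u d i) ![a, b] → St.RelMap (pifRel u d i) ![a, c] → b = c) ∧
    (∀ a b c : M, St.RelMap (pifRel u d i) ![a, c] → St.RelMap (pifRel u d i) ![b, c] → a = b)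

/-- The spectrum of φ among PIF structures: the cardinalities of its finite
models in which all binary relations are partial injective functions. -/
def pifSpectrum {u d : ℕ} (φ : (pifLang u d).Sentence) : Set ℕ :=
  {N | ∃ (M : Type) (St : (pifLang u d).Structure M),
    Finite M ∧ Nat.card M = N ∧ IsPIFStructure St ∧
    @FirstOrder.Language.Sentence.Realize (pifLang u d) M St φ}

/-- S ∈ PIFSpec_d: S is the spectrum of a first-order sentence over a vocabulary
with only unary relation symbols and d partial-injective-function symbols. -/
def PIFSpec (d : ℕ) (S : Set ℕ) : Prop :=
  ∃ (u : ℕ) (φ : (pifLang u d).Sentence),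
    (∀ M (St : (pifLang u d).Structure M), @FirstOrder.Language.Sentence.Realize (pifLang u d) M St φ → IsPIFStructure St) ∧
    S = pifSpectrum φ

def nu (u d : ℕ) : ℕ := u + u + d + d + d

namespace Stmt9
variable {u d : ℕ}

def iU (j : Fin u) : Fin (nu u d) := ((((j.castAdd u).castAdd d).castAdd d).castAdd d)
def iC (j : Fin u) : Fin (nu u d) := ((((j.natAdd u).castAdd d).castAdd d).castAdd d)
def iQ (i : Fin d) : Fin (nu u d) := (((i.natAdd (u+u)).castAdd d).castAdd d)
def iP (i : Fin d) : Fin (nu u d) := ((i.natAdd (u+u+d)).castAdd d)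
def iB (i : Fin d) : Fin (nu u d) := i.natAdd (u+u+d+d)

def tvar {n : ℕ} : (pifLang u d).Term (Empty ⊕ Fin n) → Fin n
  | .var (Sum.inr k) => k
  | .var (Sum.inl e) => e.elim
  | .func f _ => Empty.elim f

theorem tvar_eq {n : ℕ} (t : (pifLang u d).Term (Empty ⊕ Fin n)) :
    t = Language.Term.var (Sum.inr (tvar t)) := by
  match t with
  | .var (Sum.inr k) => rfl
  | .var (Sum.inl e) => exact e.elim
  | .func f _ => exact Empty.elim f

/-- variable term in the extended language -/
def xv {n : ℕ} (k : Fin n) : (pifLang (nu u d) d).Term (Empty ⊕ Fin n) :=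
  Language.Term.var (Sum.inr k)

/-- unary atom -/
def uatom {n : ℕ} (j : Fin (nu u d)) (k : Fin n) : (pifLang (nu u d) d).BoundedFormula Empty n :=
  Language.Relations.boundedFormula₁ (L := pifLang (nu u d) d) j (xv k)

/-- "boolean" sentence: ∃ z, B j z -/
def batom {n : ℕ} (j : Fin (nu u d)) : (pifLang (nu u d) d).BoundedFormula Empty n :=
  (Language.Relations.boundedFormula₁ (L := pifLang (nu u d) d) j
    (xv (Fin.last n))).ex

/-- binary atom -/
def ratom {n : ℕ} (i : Fin d) (k₁ k₂ : Fin n) : (pifLang (nu u d) d).BoundedFormula Empty n :=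
  Language.Relations.boundedFormula₂ (pifRel (nu u d) d i) (xv k₁) (xv k₂)

def trRel {n : ℕ} : ∀ {l : ℕ}, (pifLang u d).Relations l →
    ((pifLang u d).Term (Empty ⊕ Fin n) → Fin n) → (Fin l → Fin n) → (Fin n → Bool) →
    (pifLang (nu u d) d).BoundedFormula Empty n
  | 1, j, _, ks, T => if T (ks 0) then batom (iC j) else uatom (iU j) (ks 0)
  | 2, i, _, ks, T =>
      if T (ks 0) then (if T (ks 1) then batom (iB i) else uatom (iP i) (ks 1))
      else (if T (ks 1) then uatom (iQ i) (ks 0) else ratom i (ks 0) (ks 1))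
  | 0, R, _, _, _ => Empty.elim R
  | (_+3), R, _, _, _ => Empty.elim R

def tr : ∀ {n}, (pifLang u d).BoundedFormula Empty n → (Fin n → Bool) →
    (pifLang (nu u d) d).BoundedFormula Empty n
  | _, .falsum, _ => .falsum
  | _, .equal t₁ t₂, T =>
      if T (tvar t₁) then (if T (tvar t₂) then ⊤ else ⊥)
      else (if T (tvar t₂) then ⊥ else Language.Term.bdEqual (xv (tvar t₁)) (xv (tvar t₂)))
  | _, .rel R ts, T => trRel R tvar (fun i => tvar (ts i)) T
  | _, .imp f g, T => (tr f T).imp (tr g T)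
  | _, .all f, T => (tr f (Fin.snoc T false)).all ⊓ (tr f (Fin.snoc T true)).all

end Stmt9

namespace Stmt9
variable {u d : ℕ} {M : Type}

/-- The L-structure on `M ⊕ Unit` induced by an extended structure on `M`. -/
def liftStruct (St : (pifLang (nu u d) d).Structure M) :
    (pifLang u d).Structure (M ⊕ Unit) where
  funMap := fun f _ => Empty.elim f
  RelMap := fun {l} R x =>
    match l, R with
    | 1, j =>
      match x 0 with
      | Sum.inl m => St.RelMap (n := 1) (iU j) ![m]
      | Sum.inr _ => ∃ z : M, St.RelMap (n := 1) (iC j) ![z]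
    | 2, i =>
      match x 0, x 1 with
      | Sum.inl m, Sum.inl m' => St.RelMap (pifRel (nu u d) d i) ![m, m']
      | Sum.inl m, Sum.inr _ => St.RelMap (n := 1) (iQ i) ![m]
      | Sum.inr _, Sum.inl m' => St.RelMap (n := 1) (iP i) ![m']
      | Sum.inr _, Sum.inr _ => ∃ z : M, St.RelMap (n := 1) (iB i) ![z]
    | 0, R => Empty.elim R
    | (_+3), R => Empty.elim R

end Stmt9

namespace Stmt9
variable {u d : ℕ} {M : Type}
open Language

theorem eta2 (x : Fin 2 → M ⊕ Unit) : x = ![x 0, x 1] := by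
  funext k; fin_cases k <;> rfl

theorem eta1 (x : Fin 1 → M ⊕ Unit) : x = ![x 0] := by
  funext k; fin_cases k <;> rfl

section lifts
variable (St : (pifLang (nu u d) d).Structure M)

theorem lift1_l (j : (pifLang u d).Relations 1) (m : M) :
    (liftStruct St).RelMap (n := 1) (j) ![Sum.inl m] ↔
      St.RelMap (n := 1) (iU j) ![m] := Iff.rfl

theorem lift1_r (j : (pifLang u d).Relations 1) (y : Unit) :
    (liftStruct St).RelMap (n := 1) (j) ![Sum.inr y] ↔
      ∃ z : M, St.RelMap (n := 1) (iC j) ![z] := Iff.rfl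

theorem lift2_ll (i : (pifLang u d).Relations 2) (m m' : M) :
    (liftStruct St).RelMap (n := 2) (i) ![Sum.inl m, Sum.inl m'] ↔
      St.RelMap (pifRel (nu u d) d i) ![m, m'] := Iff.rfl

theorem lift2_lr (i : (pifLang u d).Relations 2) (m : M) (y : Unit) :
    (liftStruct St).RelMap (n := 2) (i) ![Sum.inl m, Sum.inr y] ↔
      St.RelMap (n := 1) (iQ i) ![m] := Iff.rfl

theorem lift2_rl (i : (pifLang u d).Relations 2) (y : Unit) (m' : M) :
    (liftStruct St).RelMap (n := 2) (i) ![Sum.inr y, Sum.inl m'] ↔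
      St.RelMap (n := 1) (iP i) ![m'] := Iff.rfl

theorem lift2_rr (i : (pifLang u d).Relations 2) (y y' : Unit) :
    (liftStruct St).RelMap (n := 2) (i) ![Sum.inr y, Sum.inr y'] ↔
      ∃ z : M, St.RelMap (n := 1) (iB i) ![z] := Iff.rfl

end lifts
end Stmt9

namespace Stmt9
variable {u d : ℕ} {M : Type}
open Language

section atoms
variable (St : (pifLang (nu u d) d).Structure M) {n : ℕ}

theorem realize_uatom (j : Fin (nu u d)) (k : Fin n) (v : Fin n → M) :
    @BoundedFormula.Realize _ M St Empty n (uatom j k) Empty.elim v ↔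
      St.RelMap (n := 1) (j) ![v k] := by
  letI := St
  simp [uatom, BoundedFormula.realize_rel₁, xv]
  exact BoundedFormula.realize_rel₁.trans (by simp)

theorem realize_batom (j : Fin (nu u d)) (v : Fin n → M) :
    @BoundedFormula.Realize _ M St Empty n (batom j) Empty.elim v ↔
      ∃ z : M, St.RelMap (n := 1) (j) ![z] := by
  letI := St
  simp [batom, BoundedFormula.realize_ex, BoundedFormula.realize_rel₁, xv]
  exact exists_congr fun a => BoundedFormula.realize_rel₁.trans (by simp)

theorem realize_ratom (i : Fin d) (k₁ k₂ : Fin n) (v : Fin n → M) :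
    @BoundedFormula.Realize _ M St Empty n (ratom i k₁ k₂) Empty.elim v ↔
      St.RelMap (pifRel (nu u d) d i) ![v k₁, v k₂] := by
  letI := St
  simp [ratom, BoundedFormula.realize_rel₂, xv]

end atoms
end Stmt9

namespace Stmt9
variable {u d : ℕ} {M : Type}
open Language

theorem snoc_w {n : ℕ} (T : Fin n → Bool) (v : Fin n → M) (w : Fin n → M ⊕ Unit)
    (hw : ∀ k, w k = cond (T k) (Sum.inr ()) (Sum.inl (v k)))
    (b : Bool) (x : M) (y : M ⊕ Unit) (hy : y = cond b (Sum.inr ()) (Sum.inl x)) :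
    ∀ k : Fin (n+1), (Fin.snoc (α := fun _ => M ⊕ Unit) w y k) = cond (Fin.snoc (α := fun _ => Bool) T b k) (Sum.inr ())
      (Sum.inl (Fin.snoc (α := fun _ => M) v x k)) := by
  intro k
  refine Fin.lastCases ?_ (fun k' => ?_) k
  · simp [hy]
  · simp [hw k']

theorem realize_tr [Nonempty M] (St : (pifLang (nu u d) d).Structure M) :
    ∀ {n} (φ : (pifLang u d).BoundedFormula Empty n) (T : Fin n → Bool) (v : Fin n → M)
      (w : Fin n → M ⊕ Unit) (hw : ∀ k, w k = cond (T k) (Sum.inr ()) (Sum.inl (v k))),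
      (@BoundedFormula.Realize (pifLang (nu u d) d) M St Empty n (tr φ T) Empty.elim v ↔
       @BoundedFormula.Realize (pifLang u d) (M ⊕ Unit) (liftStruct St) Empty n φ Empty.elim w) := by
  letI := St
  letI := liftStruct St
  intro n φ
  induction φ with
  | falsum =>
    intro T v w hw
    exact Iff.rfl
  | equal t₁ t₂ =>
    intro T v w hw
    obtain ⟨k₁, rfl⟩ : ∃ k, t₁ = Language.Term.var (Sum.inr k) := ⟨tvar t₁, tvar_eq t₁⟩
    obtain ⟨k₂, rfl⟩ : ∃ k, t₂ = Language.Term.var (Sum.inr k) := ⟨tvar t₂, tvar_eq t₂⟩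
    have hR : (@BoundedFormula.Realize (pifLang u d) (M ⊕ Unit) (liftStruct St) Empty _
        (.equal (.var (Sum.inr k₁)) (.var (Sum.inr k₂))) Empty.elim w) ↔ w k₁ = w k₂ := Iff.rfl
    rw [hR, hw k₁, hw k₂]
    cases hT₁ : T k₁ <;> cases hT₂ : T k₂ <;>
      simp [tr, tvar, hT₁, hT₂, BoundedFormula.realize_bdEqual, xv]
  | rel R ts =>
    rename_i l
    intro T v w hw
    have hts : (fun i => Term.realize (Sum.elim (Empty.elim : Empty → M ⊕ Unit) w) (ts i))
        = fun i => w (tvar (ts i)) := by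
      funext i
      conv_lhs => rw [tvar_eq (ts i)]
      rfl
    have hR : @BoundedFormula.Realize (pifLang u d) (M ⊕ Unit) (liftStruct St) Empty _
        (.rel R ts) Empty.elim w ↔
        Structure.RelMap (L := pifLang u d) (M := M ⊕ Unit) R
          (fun i => Term.realize (Sum.elim (Empty.elim : Empty → M ⊕ Unit) w) (ts i)) := Iff.rfl
    rw [hR, hts]
    match l, R, ts with
    | 0, R, ts => exact Empty.elim R
    | (l'+3), R, ts => exact Empty.elim R
    | 1, j, ts =>
      show (@BoundedFormula.Realize (pifLang (nu u d) d) M St Empty _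
        (if T (tvar (ts 0)) then batom (iC j) else uatom (iU j) (tvar (ts 0))) Empty.elim v) ↔ _
      cases hT : T (tvar (ts 0)) with
      | true =>
        have hv : (fun i : Fin 1 => w (tvar (ts i))) = ![Sum.inr ()] := by
          funext i; fin_cases i; simp [hw, hT]
        rw [if_pos (by simp [hT]), hv, realize_batom, lift1_r]
      | false =>
        have hv : (fun i : Fin 1 => w (tvar (ts i))) = ![Sum.inl (v (tvar (ts 0)))] := by
          funext i; fin_cases i; simp [hw, hT]
        rw [if_neg (by simp [hT]), hv, realize_uatom, lift1_l]
    | 2, i, ts =>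
      show (@BoundedFormula.Realize (pifLang (nu u d) d) M St Empty _
        (if T (tvar (ts 0)) then (if T (tvar (ts 1)) then batom (iB i) else uatom (iP i) (tvar (ts 1)))
         else (if T (tvar (ts 1)) then uatom (iQ i) (tvar (ts 0))
               else ratom i (tvar (ts 0)) (tvar (ts 1)))) Empty.elim v) ↔ _
      cases hT0 : T (tvar (ts 0)) with
      | true =>
        cases hT1 : T (tvar (ts 1)) with
        | true =>
          have hv : (fun i : Fin 2 => w (tvar (ts i))) = ![Sum.inr (), Sum.inr ()] := by
            funext i; fin_cases i <;> simp [hw, hT0, hT1]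
          rw [if_pos (by simp [hT0]), if_pos (by simp [hT1]), hv, realize_batom]
          exact Iff.rfl
        | false =>
          have hv : (fun i : Fin 2 => w (tvar (ts i)))
              = ![Sum.inr (), Sum.inl (v (tvar (ts 1)))] := by
            funext i; fin_cases i <;> simp [hw, hT0, hT1]
          rw [if_pos (by simp [hT0]), if_neg (by simp [hT1]), hv, realize_uatom]
          exact Iff.rfl
      | false =>
        cases hT1 : T (tvar (ts 1)) with
        | true =>
          have hv : (fun i : Fin 2 => w (tvar (ts i)))
              = ![Sum.inl (v (tvar (ts 0))), Sum.inr ()] := by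
            funext i; fin_cases i <;> simp [hw, hT0, hT1]
          rw [if_neg (by simp [hT0]), if_pos (by simp [hT1]), hv, realize_uatom]
          exact Iff.rfl
        | false =>
          have hv : (fun i : Fin 2 => w (tvar (ts i)))
              = ![Sum.inl (v (tvar (ts 0))), Sum.inl (v (tvar (ts 1)))] := by
            funext i; fin_cases i <;> simp [hw, hT0, hT1]
          rw [if_neg (by simp [hT0]), if_neg (by simp [hT1]), hv]
          exact (realize_ratom St i _ _ v).trans Iff.rfl
  | imp f g ihf ihg =>
    intro T v w hw
    simp [tr, BoundedFormula.realize_imp, ihf T v w hw, ihg T v w hw]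
  | all f ih =>
    intro T v w hw
    have x₀ : M := Classical.arbitrary M
    simp only [tr, BoundedFormula.realize_inf, BoundedFormula.realize_all]
    constructor
    · rintro ⟨h1, h2⟩ y
      rcases y with x | y
      · exact (ih (Fin.snoc T false) (Fin.snoc v x) (Fin.snoc w (Sum.inl x))
          (snoc_w T v w hw false x _ rfl)).mp (h1 x)
      · exact (ih (Fin.snoc T true) (Fin.snoc v x₀) (Fin.snoc w (Sum.inr ()))
          (snoc_w T v w hw true x₀ _ rfl)).mp (h2 x₀)
    · intro h
      refine ⟨fun x => ?_, fun x => ?_⟩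
      · exact (ih (Fin.snoc T false) (Fin.snoc v x) (Fin.snoc w (Sum.inl x))
          (snoc_w T v w hw false x _ rfl)).mpr (h (Sum.inl x))
      · exact (ih (Fin.snoc T true) (Fin.snoc v x) (Fin.snoc w (Sum.inr ()))
          (snoc_w T v w hw true x _ rfl)).mpr (h (Sum.inr ()))

end Stmt9

namespace Stmt9
variable {u d : ℕ} {M : Type}
open Language

/-- helper: three-variable universal closure -/
def all3 (f : (pifLang (nu u d) d).BoundedFormula Empty 3) : (pifLang (nu u d) d).Sentence :=
  f.all.all.all

def all2 (f : (pifLang (nu u d) d).BoundedFormula Empty 2) : (pifLang (nu u d) d).Sentence :=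
  f.all.all

def sFunc (i : Fin d) : (pifLang (nu u d) d).Sentence :=
  all3 ((ratom i 0 1).imp ((ratom i 0 2).imp (Language.Term.bdEqual (xv 1) (xv 2))))

def sInj (i : Fin d) : (pifLang (nu u d) d).Sentence :=
  all3 ((ratom i 0 2).imp ((ratom i 1 2).imp (Language.Term.bdEqual (xv 0) (xv 1))))

def sQu (i : Fin d) : (pifLang (nu u d) d).Sentence :=
  all2 ((uatom (iQ i) 0).imp ((uatom (iQ i) 1).imp (Language.Term.bdEqual (xv 0) (xv 1))))

def sPu (i : Fin d) : (pifLang (nu u d) d).Sentence :=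
  all2 ((uatom (iP i) 0).imp ((uatom (iP i) 1).imp (Language.Term.bdEqual (xv 0) (xv 1))))

def sQb (i : Fin d) : (pifLang (nu u d) d).Sentence :=
  all2 ((uatom (iQ i) 0).imp (ratom i 0 1).not)

def sPb (i : Fin d) : (pifLang (nu u d) d).Sentence :=
  all2 ((uatom (iP i) 1).imp (ratom i 0 1).not)

def sBQ (i : Fin d) : (pifLang (nu u d) d).Sentence :=
  all2 ((uatom (iB i) 0).imp (uatom (iQ i) 1).not)

def sBP (i : Fin d) : (pifLang (nu u d) d).Sentence :=
  all2 ((uatom (iB i) 0).imp (uatom (iP i) 1).not)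

def chi (i : Fin d) : (pifLang (nu u d) d).Sentence :=
  sFunc i ⊓ sInj i ⊓ sQu i ⊓ sPu i ⊓ sQb i ⊓ sPb i ⊓ sBQ i ⊓ sBP i

def bigChi (u d : ℕ) : (pifLang (nu u d) d).Sentence :=
  (List.finRange d).foldr (fun i acc => chi i ⊓ acc) ⊤

def neSent (u d : ℕ) : (pifLang (nu u d) d).Sentence :=
  (Language.Term.bdEqual (xv (0 : Fin 1)) (xv 0)).ex

section realize
variable (St : (pifLang (nu u d) d).Structure M)

theorem default_empty : (default : Empty → M) = Empty.elim := funext fun e => e.elim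

theorem realize_sFunc (i : Fin d) :
    (@Sentence.Realize _ M St (sFunc i)) ↔
      ∀ a b c : M, St.RelMap (pifRel (nu u d) d i) ![a, b] →
        St.RelMap (pifRel (nu u d) d i) ![a, c] → b = c := by
  letI := St
  simp only [Sentence.Realize, Formula.Realize, default_empty, sFunc, all3,
    BoundedFormula.realize_all, BoundedFormula.realize_imp, realize_ratom,
    BoundedFormula.realize_bdEqual, Term.realize_var, Sum.elim_inr, xv]
  constructor
  · intro h a b c
    have := h a b c
    simpa [Fin.snoc] using this
  · intro h a b c
    simpa [Fin.snoc] using h a b c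

end realize
end Stmt9

namespace Stmt9
variable {u d : ℕ} {M : Type}
open Language

def emptySent (u d : ℕ) : (pifLang (nu u d) d).Sentence :=
  (⊥ : (pifLang (nu u d) d).BoundedFormula Empty 1).all

section realize2
variable (St : (pifLang (nu u d) d).Structure M)

theorem realize_sInj (i : Fin d) :
    (@Sentence.Realize _ M St (sInj i)) ↔
      ∀ a b c : M, St.RelMap (pifRel (nu u d) d i) ![a, c] →
        St.RelMap (pifRel (nu u d) d i) ![b, c] → a = b := by
  letI := St
  simp only [Sentence.Realize, Formula.Realize, default_empty, sInj, all3,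
    BoundedFormula.realize_all, BoundedFormula.realize_imp, realize_ratom,
    BoundedFormula.realize_bdEqual, Term.realize_var, Sum.elim_inr, xv]
  constructor
  · intro h a b c; have := h a b c; simpa [Fin.snoc] using this
  · intro h a b c; simpa [Fin.snoc] using h a b c

theorem realize_sQu (i : Fin d) :
    (@Sentence.Realize _ M St (sQu i)) ↔
      ∀ a b : M, St.RelMap (n := 1) (iQ i) ![a] →
        St.RelMap (n := 1) (iQ i) ![b] → a = b := by
  letI := St
  simp only [Sentence.Realize, Formula.Realize, default_empty, sQu, all2,
    BoundedFormula.realize_all, BoundedFormula.realize_imp, realize_uatom,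
    BoundedFormula.realize_bdEqual, Term.realize_var, Sum.elim_inr, xv]
  constructor
  · intro h a b; have := h a b; simpa [Fin.snoc] using this
  · intro h a b; simpa [Fin.snoc] using h a b

theorem realize_sPu (i : Fin d) :
    (@Sentence.Realize _ M St (sPu i)) ↔
      ∀ a b : M, St.RelMap (n := 1) (iP i) ![a] →
        St.RelMap (n := 1) (iP i) ![b] → a = b := by
  letI := St
  simp only [Sentence.Realize, Formula.Realize, default_empty, sPu, all2,
    BoundedFormula.realize_all, BoundedFormula.realize_imp, realize_uatom,
    BoundedFormula.realize_bdEqual, Term.realize_var, Sum.elim_inr, xv]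
  constructor
  · intro h a b; have := h a b; simpa [Fin.snoc] using this
  · intro h a b; simpa [Fin.snoc] using h a b

theorem realize_sQb (i : Fin d) :
    (@Sentence.Realize _ M St (sQb i)) ↔
      ∀ a b : M, St.RelMap (n := 1) (iQ i) ![a] →
        ¬ St.RelMap (pifRel (nu u d) d i) ![a, b] := by
  letI := St
  simp only [Sentence.Realize, Formula.Realize, default_empty, sQb, all2,
    BoundedFormula.realize_all, BoundedFormula.realize_imp, BoundedFormula.realize_not,
    realize_uatom, realize_ratom]
  constructor
  · intro h a b; have := h a b; simpa [Fin.snoc] using this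
  · intro h a b; simpa [Fin.snoc] using h a b

theorem realize_sPb (i : Fin d) :
    (@Sentence.Realize _ M St (sPb i)) ↔
      ∀ a b : M, St.RelMap (n := 1) (iP i) ![b] →
        ¬ St.RelMap (pifRel (nu u d) d i) ![a, b] := by
  letI := St
  simp only [Sentence.Realize, Formula.Realize, default_empty, sPb, all2,
    BoundedFormula.realize_all, BoundedFormula.realize_imp, BoundedFormula.realize_not,
    realize_uatom, realize_ratom]
  constructor
  · intro h a b; have := h a b; simpa [Fin.snoc] using this
  · intro h a b; simpa [Fin.snoc] using h a b

theorem realize_sBQ (i : Fin d) :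
    (@Sentence.Realize _ M St (sBQ i)) ↔
      ∀ a b : M, St.RelMap (n := 1) (iB i) ![a] →
        ¬ St.RelMap (n := 1) (iQ i) ![b] := by
  letI := St
  simp only [Sentence.Realize, Formula.Realize, default_empty, sBQ, all2,
    BoundedFormula.realize_all, BoundedFormula.realize_imp, BoundedFormula.realize_not,
    realize_uatom]
  constructor
  · intro h a b; have := h a b; simpa [Fin.snoc] using this
  · intro h a b; simpa [Fin.snoc] using h a b

theorem realize_sBP (i : Fin d) :
    (@Sentence.Realize _ M St (sBP i)) ↔
      ∀ a b : M, St.RelMap (n := 1) (iB i) ![a] →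
        ¬ St.RelMap (n := 1) (iP i) ![b] := by
  letI := St
  simp only [Sentence.Realize, Formula.Realize, default_empty, sBP, all2,
    BoundedFormula.realize_all, BoundedFormula.realize_imp, BoundedFormula.realize_not,
    realize_uatom]
  constructor
  · intro h a b; have := h a b; simpa [Fin.snoc] using this
  · intro h a b; simpa [Fin.snoc] using h a b

theorem realize_bigChi :
    (@Sentence.Realize _ M St (bigChi u d)) ↔ ∀ i : Fin d, @Sentence.Realize _ M St (chi i) := by
  letI := St
  have : ∀ l : List (Fin d),
      (@Sentence.Realize _ M St (l.foldr (fun i acc => chi i ⊓ acc) ⊤)) ↔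
        ∀ i ∈ l, @Sentence.Realize _ M St (chi i) := by
    intro l
    induction l with
    | nil => simp [Sentence.Realize, Formula.Realize, BoundedFormula.realize_top]
    | cons hd tl ih =>
      simp only [List.foldr_cons, Sentence.Realize, Formula.Realize,
        BoundedFormula.realize_inf] at *
      simp [ih, List.forall_mem_cons]
  rw [bigChi, this]
  simp [List.mem_finRange]

theorem realize_chi (i : Fin d) :
    (@Sentence.Realize _ M St (chi i)) ↔
      (@Sentence.Realize _ M St (sFunc i) ∧ @Sentence.Realize _ M St (sInj i) ∧
       @Sentence.Realize _ M St (sQu i) ∧ @Sentence.Realize _ M St (sPu i) ∧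
       @Sentence.Realize _ M St (sQb i) ∧ @Sentence.Realize _ M St (sPb i) ∧
       @Sentence.Realize _ M St (sBQ i) ∧ @Sentence.Realize _ M St (sBP i)) := by
  letI := St
  simp only [chi, Sentence.Realize, Formula.Realize, BoundedFormula.realize_inf]
  tauto

theorem realize_neSent :
    (@Sentence.Realize _ M St (neSent u d)) ↔ Nonempty M := by
  letI := St
  simp only [neSent, Sentence.Realize, Formula.Realize, BoundedFormula.realize_ex,
    BoundedFormula.realize_bdEqual]
  exact ⟨fun ⟨a, _⟩ => ⟨a⟩, fun ⟨a⟩ => ⟨a, by trivial⟩⟩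

theorem realize_emptySent :
    (@Sentence.Realize _ M St (emptySent u d)) ↔ IsEmpty M := by
  letI := St
  simp only [emptySent, Sentence.Realize, Formula.Realize, BoundedFormula.realize_all,
    BoundedFormula.realize_bot]
  exact ⟨fun h => ⟨fun x => h x⟩, fun h x => h.elim x⟩

end realize2
end Stmt9

namespace Stmt9
variable {u d : ℕ} {M : Type}
open Language

theorem pif_of_chi (St : (pifLang (nu u d) d).Structure M)
    (hchi : ∀ i : Fin d, @Sentence.Realize _ M St (chi i)) : IsPIFStructure St := by
  intro i
  obtain ⟨hf, hi, -, -, -, -, -, -⟩ := (realize_chi St i).mp (hchi i)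
  exact ⟨(realize_sFunc St i).mp hf, (realize_sInj St i).mp hi⟩

theorem lift_pif (St : (pifLang (nu u d) d).Structure M)
    (hchi : ∀ i : Fin d, @Sentence.Realize _ M St (chi i)) :
    IsPIFStructure (liftStruct St) := by
  intro i
  obtain ⟨hf, hinj, hqu, hpu, hqb, hpb, hbq, hbp⟩ := (realize_chi St i).mp (hchi i)
  rw [realize_sFunc] at hf
  rw [realize_sInj] at hinj
  rw [realize_sQu] at hqu
  rw [realize_sPu] at hpu
  rw [realize_sQb] at hqb
  rw [realize_sPb] at hpb
  rw [realize_sBQ] at hbq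
  rw [realize_sBP] at hbp
  constructor
  · rintro (m | ⟨⟩) (m1 | ⟨⟩) (m2 | ⟨⟩) h1 h2
    · rw [lift2_ll] at h1 h2; exact congrArg Sum.inl (hf m m1 m2 h1 h2)
    · rw [lift2_ll] at h1; rw [lift2_lr] at h2; exact absurd h1 (hqb m m1 h2)
    · rw [lift2_lr] at h1; rw [lift2_ll] at h2; exact absurd h2 (hqb m m2 h1)
    · rfl
    · rw [lift2_rl] at h1 h2; exact congrArg Sum.inl (hpu m1 m2 h1 h2)
    · rw [lift2_rl] at h1; rw [lift2_rr] at h2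
      obtain ⟨z, hz⟩ := h2; exact absurd h1 (hbp z m1 hz)
    · rw [lift2_rr] at h1; rw [lift2_rl] at h2
      obtain ⟨z, hz⟩ := h1; exact absurd h2 (hbp z m2 hz)
    · rfl
  · rintro (m | ⟨⟩) (m1 | ⟨⟩) (m2 | ⟨⟩) h1 h2
    · rw [lift2_ll] at h1 h2; exact congrArg Sum.inl (hinj m m1 m2 h1 h2)
    · rw [lift2_lr] at h1 h2; exact congrArg Sum.inl (hqu m m1 h1 h2)
    · rw [lift2_ll] at h1; rw [lift2_rl] at h2; exact absurd h1 (hpb m m2 h2)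
    · rw [lift2_lr] at h1; rw [lift2_rr] at h2
      obtain ⟨z, hz⟩ := h2; exact absurd h1 (hbq z m hz)
    · rw [lift2_rl] at h1; rw [lift2_ll] at h2; exact absurd h2 (hpb m1 m2 h1)
    · rw [lift2_rr] at h1; rw [lift2_lr] at h2
      obtain ⟨z, hz⟩ := h1; exact absurd h2 (hbq z m1 hz)
    · rfl
    · rfl

end Stmt9

namespace Stmt9
variable {u d : ℕ}
open Language

def mkUnary {M : Type} (fU fC : Fin u → M → Prop) (fQ fP fB : Fin d → M → Prop) :
    Fin (nu u d) → M → Prop :=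
  Fin.addCases (Fin.addCases (Fin.addCases (Fin.addCases fU fC) fQ) fP) fB

variable {M : Type} {fU fC : Fin u → M → Prop} {fQ fP fB : Fin d → M → Prop}

@[simp] theorem mkUnary_iU (j : Fin u) : mkUnary fU fC fQ fP fB (iU j) = fU j := by
  unfold mkUnary iU
  rw [Fin.addCases_left, Fin.addCases_left, Fin.addCases_left, Fin.addCases_left]

@[simp] theorem mkUnary_iC (j : Fin u) : mkUnary fU fC fQ fP fB (iC j) = fC j := by
  unfold mkUnary iC
  rw [Fin.addCases_left, Fin.addCases_left, Fin.addCases_left, Fin.addCases_right]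

@[simp] theorem mkUnary_iQ (i : Fin d) : mkUnary fU fC fQ fP fB (iQ i) = fQ i := by
  unfold mkUnary iQ
  rw [Fin.addCases_left, Fin.addCases_left, Fin.addCases_right]

@[simp] theorem mkUnary_iP (i : Fin d) : mkUnary fU fC fQ fP fB (iP i) = fP i := by
  unfold mkUnary iP
  rw [Fin.addCases_left, Fin.addCases_right]

@[simp] theorem mkUnary_iB (i : Fin d) : mkUnary fU fC fQ fP fB (iB i) = fB i := by
  unfold mkUnary iB
  rw [Fin.addCases_right]

/-- The extended structure on the complement of a point. -/
def subStruct {M' : Type} (St : (pifLang u d).Structure M') (a : M') :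
    (pifLang (nu u d) d).Structure {y : M' // y ≠ a} where
  funMap := fun f _ => Empty.elim f
  RelMap := fun {l} R x =>
    match l, R with
    | 1, j => mkUnary
        (fun j' m => St.RelMap (n := 1) (j') ![m.val])
        (fun j' _ => St.RelMap (n := 1) (j') ![a])
        (fun i m => St.RelMap (pifRel u d i) ![m.val, a])
        (fun i m => St.RelMap (pifRel u d i) ![a, m.val])
        (fun i _ => St.RelMap (pifRel u d i) ![a, a]) j (x 0)
    | 2, i => St.RelMap (pifRel u d i) ![(x 0).val, (x 1).val]
    | 0, R => Empty.elim R
    | _+3, R => Empty.elim R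

section subLemmas
variable {M' : Type} (St : (pifLang u d).Structure M') (a : M')

theorem sub_iU (j : Fin u) (m : {y : M' // y ≠ a}) :
    (subStruct St a).RelMap (n := 1) (iU j) ![m] ↔
      St.RelMap (n := 1) (j) ![m.val] := by
  show mkUnary _ _ _ _ _ (iU j) _ ↔ _
  rw [mkUnary_iU]
  simp

theorem sub_iC (j : Fin u) (m : {y : M' // y ≠ a}) :
    (subStruct St a).RelMap (n := 1) (iC j) ![m] ↔
      St.RelMap (n := 1) (j) ![a] := by
  show mkUnary _ _ _ _ _ (iC j) _ ↔ _
  rw [mkUnary_iC]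

theorem sub_iQ (i : Fin d) (m : {y : M' // y ≠ a}) :
    (subStruct St a).RelMap (n := 1) (iQ i) ![m] ↔
      St.RelMap (pifRel u d i) ![m.val, a] := by
  show mkUnary _ _ _ _ _ (iQ i) _ ↔ _
  rw [mkUnary_iQ]
  simp

theorem sub_iP (i : Fin d) (m : {y : M' // y ≠ a}) :
    (subStruct St a).RelMap (n := 1) (iP i) ![m] ↔
      St.RelMap (pifRel u d i) ![a, m.val] := by
  show mkUnary _ _ _ _ _ (iP i) _ ↔ _
  rw [mkUnary_iP]
  simp

theorem sub_iB (i : Fin d) (m : {y : M' // y ≠ a}) :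
    (subStruct St a).RelMap (n := 1) (iB i) ![m] ↔
      St.RelMap (pifRel u d i) ![a, a] := by
  show mkUnary _ _ _ _ _ (iB i) _ ↔ _
  rw [mkUnary_iB]

theorem sub_rel (i : Fin d) (m m' : {y : M' // y ≠ a}) :
    (subStruct St a).RelMap (pifRel (nu u d) d i) ![m, m'] ↔
      St.RelMap (pifRel u d i) ![m.val, m'.val] := Iff.rfl

theorem sub_chi (hpif : IsPIFStructure St) (i : Fin d) :
    @Sentence.Realize _ _ (subStruct St a) (chi i) := by
  obtain ⟨hf, hinj⟩ := hpif i
  rw [realize_chi]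
  refine ⟨?_, ?_, ?_, ?_, ?_, ?_, ?_, ?_⟩
  · rw [realize_sFunc]
    intro x y z h1 h2
    rw [sub_rel] at h1 h2
    exact Subtype.ext (hf _ _ _ h1 h2)
  · rw [realize_sInj]
    intro x y z h1 h2
    rw [sub_rel] at h1 h2
    exact Subtype.ext (hinj _ _ _ h1 h2)
  · rw [realize_sQu]
    intro x y h1 h2
    rw [sub_iQ] at h1 h2
    exact Subtype.ext (hinj _ _ _ h1 h2)
  · rw [realize_sPu]
    intro x y h1 h2
    rw [sub_iP] at h1 h2
    exact Subtype.ext (hf _ _ _ h1 h2)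
  · rw [realize_sQb]
    intro x y h1 h2
    rw [sub_iQ] at h1
    rw [sub_rel] at h2
    exact y.prop (hf _ _ _ h2 h1)
  · rw [realize_sPb]
    intro x y h1 h2
    rw [sub_iP] at h1
    rw [sub_rel] at h2
    exact x.prop ((hinj _ _ _ h1 h2).symm)
  · rw [realize_sBQ]
    intro x y h1 h2
    rw [sub_iB] at h1
    rw [sub_iQ] at h2
    exact y.prop (hinj _ _ _ h2 h1)
  · rw [realize_sBP]
    intro x y h1 h2
    rw [sub_iB] at h1
    rw [sub_iP] at h2
    exact y.prop (hf _ _ _ h2 h1)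
end subLemmas
end Stmt9

namespace Stmt9
variable {u d : ℕ}
open Language

section equivSec
variable {M' : Type} (a : M')

noncomputable def delEquiv : ({y : M' // y ≠ a} ⊕ Unit) ≃ M' where
  toFun := Sum.elim Subtype.val (fun _ => a)
  invFun := fun y => @dite _ (y = a) (Classical.dec _) (fun _ => Sum.inr ()) (fun h => Sum.inl ⟨y, h⟩)
  left_inv := by
    rintro (m | ⟨⟩)
    · simp [m.prop]
    · simp
  right_inv := fun y => by
    by_cases h : y = a <;> simp [h]

variable (St : (pifLang u d).Structure M')

theorem realize_del [Nonempty {y : M' // y ≠ a}] (φ : (pifLang u d).Sentence) :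
    (@Sentence.Realize _ _ (liftStruct (subStruct St a)) φ) ↔ @Sentence.Realize _ _ St φ := by
  letI := liftStruct (subStruct St a)
  letI := St
  have g : ({y : M' // y ≠ a} ⊕ Unit) ≃[pifLang u d] M' := by
    refine { toEquiv := delEquiv a, map_fun' := fun {l} f _ => Empty.elim f,
             map_rel' := fun {l} r x => ?_ }

    match l, r with
    | 0, r => exact Empty.elim r
    | (l'+3), r => exact Empty.elim r
    | 1, j =>
      rcases h0 : x 0 with m | y
      · have hc : (delEquiv a).toFun ∘ x = ![m.val] := by
          funext k; fin_cases k; simp [delEquiv, h0]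
        rw [hc, eta1 x, h0, lift1_l]
        exact (sub_iU St a j m).symm
      · have hc : (delEquiv a).toFun ∘ x = ![a] := by
          funext k; fin_cases k; simp [delEquiv, h0]
        rw [hc, eta1 x, h0, lift1_r]
        constructor
        · intro h
          exact ⟨Classical.arbitrary _, (sub_iC St a j _).mpr h⟩
        · rintro ⟨z, hz⟩
          exact (sub_iC St a j z).mp hz
    | 2, i =>
      rcases h0 : x 0 with m | y <;> rcases h1 : x 1 with m' | y'
      · have hc : (delEquiv a).toFun ∘ x = ![m.val, m'.val] := by
          funext k; fin_cases k <;> simp [delEquiv, h0, h1]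
        rw [hc, eta2 x, h0, h1, lift2_ll]
        exact Iff.rfl
      · have hc : (delEquiv a).toFun ∘ x = ![m.val, a] := by
          funext k; fin_cases k <;> simp [delEquiv, h0, h1]
        rw [hc, eta2 x, h0, h1, lift2_lr]
        exact (sub_iQ St a i m).symm
      · have hc : (delEquiv a).toFun ∘ x = ![a, m'.val] := by
          funext k; fin_cases k <;> simp [delEquiv, h0, h1]
        rw [hc, eta2 x, h0, h1, lift2_rl]
        exact (sub_iP St a i m').symm
      · have hc : (delEquiv a).toFun ∘ x = ![a, a] := by
          funext k; fin_cases k <;> simp [delEquiv, h0, h1]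
        rw [hc, eta2 x, h0, h1, lift2_rr]
        constructor
        · intro h
          exact ⟨Classical.arbitrary _, (sub_iB St a i _).mpr h⟩
        · rintro ⟨z, hz⟩
          exact (sub_iB St a i z).mp hz
  exact StrongHomClass.realize_sentence g φ

end equivSec
end Stmt9

namespace Stmt9
variable {u d : ℕ}
open Language

def psiMain (u d : ℕ) (φ : (pifLang u d).Sentence) : (pifLang (nu u d) d).Sentence :=
  (bigChi u d ⊓ neSent u d) ⊓ tr φ default

theorem bf0_iff {L : Language} {M : Type} (St : L.Structure M) (φ : L.BoundedFormula Empty 0)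
    (v v' : Empty → M) (xs xs' : Fin 0 → M) :
    @BoundedFormula.Realize L M St Empty 0 φ v xs ↔
      @BoundedFormula.Realize L M St Empty 0 φ v' xs' := by
  rw [show v = v' from funext fun e => e.elim, show xs = xs' from funext fun k => Fin.elim0 k]

theorem realize_psiMain {M : Type} (St : (pifLang (nu u d) d).Structure M)
    (φ : (pifLang u d).Sentence) :
    @Sentence.Realize _ M St (psiMain u d φ) ↔
      (@Sentence.Realize _ M St (bigChi u d) ∧ @Sentence.Realize _ M St (neSent u d) ∧
       @BoundedFormula.Realize _ M St Empty 0 (tr φ default) Empty.elim default) := by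
  letI := St
  simp only [psiMain, Sentence.Realize, Formula.Realize, BoundedFormula.realize_inf,
    default_empty]
  tauto

def emptyStruct (u' d' : ℕ) : (pifLang u' d').Structure Empty where
  funMap := fun f _ => Empty.elim f
  RelMap := fun _ _ => False

theorem empty_pif {u' d' : ℕ} {M : Type} [IsEmpty M] (St : (pifLang u' d').Structure M) :
    IsPIFStructure St :=
  fun _ => ⟨fun a => isEmptyElim a, fun a => isEmptyElim a⟩

theorem spec_sub {N : ℕ} (φ : (pifLang u d).Sentence)
    (h : N ∈ pifSpectrum (psiMain u d φ)) : N + 1 ∈ pifSpectrum φ := by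
  obtain ⟨M, St, fin, hcard, hpifSt, hreal⟩ := h
  obtain ⟨hchi, hne, htr⟩ := (realize_psiMain St φ).mp hreal
  haveI := fin
  haveI : Nonempty M := (realize_neSent St).mp hne
  have hchi' := (realize_bigChi St).mp hchi
  refine ⟨M ⊕ Unit, liftStruct St, inferInstance, ?_, lift_pif St hchi', ?_⟩
  · rw [Nat.card_sum, hcard, show Nat.card Unit = 1 from Nat.card_unique]
  · have h3 := (realize_tr St φ default default default (fun k => k.elim0)).mp htr
    exact (bf0_iff _ φ _ _ _ _).mp h3

theorem spec_super {N : ℕ} (φ : (pifLang u d).Sentence) (hN : N ≠ 0)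
    (h : N + 1 ∈ pifSpectrum φ) : N ∈ pifSpectrum (psiMain u d φ) := by
  obtain ⟨M', St, fin, hcard, hpif, hreal⟩ := h
  haveI := fin
  haveI : Nonempty M' := (Nat.card_pos_iff.mp (by omega)).1
  have a : M' := Classical.arbitrary M'
  haveI fin2 : Finite {y : M' // y ≠ a} := Subtype.finite
  have hcard2 : Nat.card {y : M' // y ≠ a} = N := by
    have h := Nat.card_congr (delEquiv (M' := M') a)
    rw [Nat.card_sum, show Nat.card Unit = 1 from Nat.card_unique, hcard] at h
    omega
  haveI hne2 : Nonempty {y : M' // y ≠ a} :=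
    (Nat.card_pos_iff.mp (by rw [hcard2]; omega)).1
  refine ⟨{y : M' // y ≠ a}, subStruct St a, fin2, hcard2,
    pif_of_chi _ (fun i => sub_chi St a hpif i), ?_⟩
  rw [realize_psiMain]
  refine ⟨(realize_bigChi _).mpr (fun i => sub_chi St a hpif i),
    (realize_neSent _).mpr hne2, ?_⟩
  have h2 : @Sentence.Realize _ _ (liftStruct (subStruct St a)) φ :=
    (realize_del a St φ).mpr hreal
  have h3 : @BoundedFormula.Realize _ _ (liftStruct (subStruct St a)) Empty 0 φ
      Empty.elim default :=
    (bf0_iff _ φ _ _ _ _).mp h2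
  exact (realize_tr (subStruct St a) φ default default default (fun k => k.elim0)).mpr h3

theorem realize_sup_iff {M : Type} (St : (pifLang (nu u d) d).Structure M)
    (φ ψ : (pifLang (nu u d) d).Sentence) :
    @Sentence.Realize _ M St (φ ⊔ ψ) ↔
      (@Sentence.Realize _ M St φ ∨ @Sentence.Realize _ M St ψ) := by
  letI := St
  simp only [Sentence.Realize, Formula.Realize, BoundedFormula.realize_sup]

end Stmt9

open Stmt9 in
/-- if S ∈ PIFSpec_d then {x : x + 1 ∈ S} ∈ PIFSpec_d. -/
theorem stmt_9 (d : ℕ) (S : Set ℕ) (hS : PIFSpec d S) :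
    PIFSpec d {x : ℕ | x + 1 ∈ S} := by
  obtain ⟨u, φ, hmod, rfl⟩ := hS
  by_cases h1 : 1 ∈ pifSpectrum φ
  · refine ⟨nu u d, psiMain u d φ ⊔ emptySent u d, ?_, ?_⟩
    · intro M St h
      rcases (realize_sup_iff St _ _).mp h with h | h
      · exact pif_of_chi St ((realize_bigChi St).mp ((realize_psiMain St φ).mp h).1)
      · haveI := (realize_emptySent St).mp h
        exact empty_pif St
    · ext N
      simp only [Set.mem_setOf_eq]
      constructor
      · intro hN
        by_cases hN0 : N = 0
        · subst hN0
          refine ⟨Empty, emptyStruct _ _, inferInstance, by simp, empty_pif _, ?_⟩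
          exact (realize_sup_iff _ _ _).mpr (Or.inr ((realize_emptySent _).mpr inferInstance))
        · obtain ⟨M, St, fin, hcard, hpifSt, hreal⟩ := spec_super φ hN0 hN
          exact ⟨M, St, fin, hcard, hpifSt, (realize_sup_iff _ _ _).mpr (Or.inl hreal)⟩
      · rintro ⟨M, St, fin, hcard, hpifSt, hreal⟩
        rcases (realize_sup_iff St _ _).mp hreal with h | h
        · exact spec_sub φ ⟨M, St, fin, hcard, hpifSt, h⟩
        · haveI := (realize_emptySent St).mp h
          have : N = 0 := by rw [← hcard]; simp
          rw [this]
          exact h1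
  · refine ⟨nu u d, psiMain u d φ, ?_, ?_⟩
    · intro M St h
      exact pif_of_chi St ((realize_bigChi St).mp ((realize_psiMain St φ).mp h).1)
    · ext N
      simp only [Set.mem_setOf_eq]
      constructor
      · intro hN
        by_cases hN0 : N = 0
        · subst hN0
          exact absurd hN h1
        · exact spec_super φ hN0 hN
      · intro h
        exact spec_sub φ h
end

section
/- If S ∈ PIFSpec_d, then for any fixed l ≥ 0 the set {2dn + l : n ∈ S} is in BDSpec_3: it is the spectrum of a first-order sentence in a vocabulary with one binary relation E and unary relations, all of whose models interpret E as a symmetric relation of maximum degree at most 3. The construction replaces each element a of a model by a path gadget of 2d vertices p₁(a),…,p_d(a),q₁(a),…,q_d(a), with an extra edge from p_i(a) to q_i(a') whenever f_i(a) = a', plus l isolated vertices; the resulting graph has maximum degree 3. -/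
open FirstOrder

/-- The vocabulary with u unary relation symbols and one binary relation E. -/
def graphLang (u : ℕ) : Language where
  Functions := fun _ => Empty
  Relations := fun n => match n with
    | 1 => Fin u
    | 2 => Unit
    | _ => Empty

/-- The binary relation symbol E of `graphLang u`. -/
def graphE (u : ℕ) : (graphLang u).Relations 2 := ()

/-- E is interpreted as a symmetric relation of maximum degree at most 3. -/
def SymDeg3 {u : ℕ} {M : Type} (St : (graphLang u).Structure M) : Prop :=
  (∀ a b : M, St.RelMap (graphE u) ![a, b] → St.RelMap (graphE u) ![b, a]) ∧
  (∀ v : M, {w : M | w ≠ v ∧ St.RelMap (graphE u) ![v, w]}.Finite ∧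
    Set.ncard {w : M | w ≠ v ∧ St.RelMap (graphE u) ![v, w]} ≤ 3)

/-- The spectrum of a sentence of `graphLang u`. -/
def graphSpectrum {u : ℕ} (φ : (graphLang u).Sentence) : Set ℕ :=
  {N | ∃ (M : Type) (St : (graphLang u).Structure M),
    Finite M ∧ Nat.card M = N ∧
    @FirstOrder.Language.Sentence.Realize (graphLang u) M St φ}

/-- S ∈ BDSpec_3: S is the spectrum of a sentence in a vocabulary with one
binary relation E and unary relations, all of whose models interpret E as a
symmetric relation of maximum degree at most 3. -/
def BDSpec3 (S : Set ℕ) : Prop :=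
  ∃ (u : ℕ) (φ : (graphLang u).Sentence),
    (∀ (M : Type) (St : (graphLang u).Structure M),
      @FirstOrder.Language.Sentence.Realize (graphLang u) M St φ → SymDeg3 St) ∧
    S = graphSpectrum φ

open FirstOrder

section Aux

lemma card_eq_of_unique_rel {A B : Type} (R : A → B → Prop)
    (h1 : ∀ a, ∃! b, R a b) (h2 : ∀ b, ∃! a, R a b) : Nat.card A = Nat.card B := by
  refine Nat.card_eq_of_bijective (fun a => (h1 a).choose) ⟨fun a a' hh => ?_, fun b => ?_⟩
  · simp only at hh
    have ha : R a (h1 a').choose := by rw [← hh]; exact (h1 a).choose_spec.1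
    exact (h2 (h1 a').choose).unique ha (h1 a').choose_spec.1
  · exact ⟨(h2 b).choose, ((h1 (h2 b).choose).choose_spec.2 b (h2 b).choose_spec.1).symm⟩

lemma finite_ncard_le_three {X : Type} (s : Set X)
    (h : ∀ w : Fin 4 → X, (∀ i, w i ∈ s) → ¬ Function.Injective w) :
    s.Finite ∧ s.ncard ≤ 3 := by
  classical
  have hfin : s.Finite := by
    by_contra hinf
    have hinf' : s.Infinite := hinf
    have e := hinf'.natEmbedding
    refine h (fun i => (e i.1).1) (fun i => (e i.1).2) (fun i j hij => ?_)
    exact Fin.ext (e.injective (Subtype.ext hij))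
  refine ⟨hfin, ?_⟩
  by_contra hc
  push_neg at hc
  obtain ⟨t, hts, htc⟩ := Finset.exists_subset_card_eq (s := hfin.toFinset) (n := 4)
    (by rw [← Set.ncard_eq_toFinset_card s hfin]; omega)
  have e := Finset.equivFinOfCardEq htc
  refine h (fun i => (e.symm i).1) (fun i => hfin.mem_toFinset.1 (hts (e.symm i).2)) ?_
  intro i j hij
  exact e.symm.injective (Subtype.ext hij)

lemma exists_greedy_coloring : ∀ (n : ℕ) (M : Type) [Fintype M], Fintype.card M = n →
    ∀ (Adj : M → M → Prop) (K : ℕ), 0 < K →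
    (∀ a, ¬ ∃ w : Fin K → M, Function.Injective w ∧
        ∀ j, w j ≠ a ∧ (Adj a (w j) ∨ Adj (w j) a)) →
    ∃ c : M → Fin K, ∀ a b, a ≠ b → Adj a b → c a ≠ c b := by
  intro n
  induction n using Nat.strong_induction_on with
  | _ n ih =>
    intro M _ hcard Adj K hK h
    classical
    rcases isEmpty_or_nonempty M with hM | hM
    · exact ⟨fun a => (IsEmpty.elim hM a), fun a => (IsEmpty.elim hM a)⟩
    · obtain ⟨a⟩ := hM
      haveI : Nonempty M := ⟨a⟩
      have hn : 0 < n := hcard ▸ Fintype.card_pos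
      have hcard' : Fintype.card {x : M // x ≠ a} = n - 1 := by
        simp only [Fintype.card_subtype_compl, Fintype.card_subtype_eq, hcard]
      obtain ⟨c', hc'⟩ := ih (n-1) (by omega) {x : M // x ≠ a} hcard'
        (fun x y => Adj x.1 y.1) K hK (by
          intro x ⟨w, hwinj, hwp⟩
          refine h x.1 ⟨fun j => (w j).1, fun i j hij => hwinj (Subtype.ext hij), fun j => ?_⟩
          exact ⟨fun hh => (hwp j).1 (Subtype.ext hh), (hwp j).2⟩)
      set nbrs : Finset {x : M // x ≠ a} :=
        Finset.univ.filter (fun x : {x : M // x ≠ a} => Adj a x.1 ∨ Adj x.1 a) with hnbrs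
      have hcardnb : nbrs.card < K := by
        by_contra hge
        push_neg at hge
        obtain ⟨t, hts, htc⟩ := Finset.exists_subset_card_eq (s := nbrs) (n := K) hge
        have e := Finset.equivFinOfCardEq htc
        refine h a ⟨fun i => (e.symm i).1.1,
          fun i j hij => e.symm.injective (Subtype.ext (Subtype.ext hij)), fun j => ?_⟩
        have hmem := hts (e.symm j).2
        rw [hnbrs, Finset.mem_filter] at hmem
        exact ⟨(e.symm j).1.2, hmem.2⟩
      set used : Finset (Fin K) := nbrs.image c' with hused
      have husedlt : used.card < K := lt_of_le_of_lt (Finset.card_image_le) hcardnb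
      have hne : (Finset.univ \ used).Nonempty := by
        rw [← Finset.card_pos, Finset.card_sdiff_of_subset (Finset.subset_univ _), Finset.card_univ,
          Fintype.card_fin]
        omega
      obtain ⟨c0, hc0⟩ := hne
      rw [Finset.mem_sdiff] at hc0
      refine ⟨fun x => if hx : x = a then c0 else c' ⟨x, hx⟩, ?_⟩
      intro x y hxy hadj
      by_cases hx : x = a <;> by_cases hy : y = a
      · exact absurd (hx.trans hy.symm) hxy
      · subst hx
        simp only [dif_pos, dif_neg hy]
        intro hh
        refine hc0.2 ?_
        rw [hused]
        refine Finset.mem_image.2 ⟨⟨y, hy⟩, ?_, hh.symm⟩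
        rw [hnbrs, Finset.mem_filter]
        exact ⟨Finset.mem_univ _, Or.inl hadj⟩
      · subst hy
        simp only [dif_pos, dif_neg hx]
        intro hh
        refine hc0.2 ?_
        rw [hused]
        refine Finset.mem_image.2 ⟨⟨x, hx⟩, ?_, hh⟩
        rw [hnbrs, Finset.mem_filter]
        exact ⟨Finset.mem_univ _, Or.inr hadj⟩
      · simp only [dif_neg hx, dif_neg hy]
        exact hc' ⟨x, hx⟩ ⟨y, hy⟩ (fun hh => hxy (congrArg Subtype.val hh)) hadj

end Aux

namespace Stmt12
open FirstOrder Language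
namespace BoundedFormula
noncomputable def iSup {L : Language} {α β : Type*} {n : ℕ} (s : Finset β)
    (f : β → L.BoundedFormula α n) : L.BoundedFormula α n :=
  FirstOrder.Language.BoundedFormula.iSup (fun b : s => f b)
noncomputable def iInf {L : Language} {α β : Type*} {n : ℕ} (s : Finset β)
    (f : β → L.BoundedFormula α n) : L.BoundedFormula α n :=
  FirstOrder.Language.BoundedFormula.iInf (fun b : s => f b)
theorem realize_iSup {L : Language} {M α β : Type*} [L.Structure M] {n : ℕ} (s : Finset β)
    (f : β → L.BoundedFormula α n) (v : α → M) (v' : Fin n → M) :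
    (iSup s f).Realize v v' ↔ ∃ b ∈ s, (f b).Realize v v' := by
  simp [iSup, FirstOrder.Language.BoundedFormula.realize_iSup]
theorem realize_iInf {L : Language} {M α β : Type*} [L.Structure M] {n : ℕ} (s : Finset β)
    (f : β → L.BoundedFormula α n) (v : α → M) (v' : Fin n → M) :
    (iInf s f).Realize v v' ↔ ∀ b ∈ s, (f b).Realize v v' := by
  simp [iInf, FirstOrder.Language.BoundedFormula.realize_iInf]
end BoundedFormula
namespace Formula
noncomputable def iAlls {L : Language} {α β γ : Type*} [Finite γ] (f : α → β ⊕ γ)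
    (φ : L.Formula α) : L.Formula β :=
  FirstOrder.Language.Formula.iAlls γ (FirstOrder.Language.Formula.relabel f φ)
noncomputable def iExs {L : Language} {α β γ : Type*} [Finite γ] (f : α → β ⊕ γ)
    (φ : L.Formula α) : L.Formula β :=
  FirstOrder.Language.Formula.iExs γ (FirstOrder.Language.Formula.relabel f φ)
theorem realize_iAlls {L : Language} {M α β γ : Type*} [L.Structure M] [Finite γ]
    {f : α → β ⊕ γ} {φ : L.Formula α} {v : β → M} :
    (iAlls f φ).Realize v ↔ ∀ i : γ → M, φ.Realize (fun a => Sum.elim v i (f a)) := by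
  unfold iAlls
  rw [FirstOrder.Language.Formula.realize_iAlls]
  exact forall_congr' fun i => FirstOrder.Language.Formula.realize_relabel
theorem realize_iExs {L : Language} {M α β γ : Type*} [L.Structure M] [Finite γ]
    {f : α → β ⊕ γ} {φ : L.Formula α} {v : β → M} :
    (iExs f φ).Realize v ↔ ∃ i : γ → M, φ.Realize (fun a => Sum.elim v i (f a)) := by
  unfold iExs
  rw [FirstOrder.Language.Formula.realize_iExs]
  exact exists_congr fun i => FirstOrder.Language.Formula.realize_relabel
end Formula

variable (u d : ℕ)

/-- Index type for the unary predicates of the graph vocabulary: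
original unary relations, loop markers, labels (2d types + ISO), colors. -/
def UU : ℕ := (u + d) + ((2*d+1) + (2*d+1))

def Idx : Type := (Fin u ⊕ Fin d) ⊕ (Fin (2*d+1) ⊕ Fin (2*d+1))

def idxE : Idx u d ≃ Fin (UU u d) :=
  ((finSumFinEquiv.sumCongr finSumFinEquiv).symm.symm.trans finSumFinEquiv)

def iO (j : Fin u) : Idx u d := Sum.inl (Sum.inl j)
def iL (i : Fin d) : Idx u d := Sum.inl (Sum.inr i)
def iLab (τ : Fin (2*d+1)) : Idx u d := Sum.inr (Sum.inl τ)
def iC (c : Fin (2*d+1)) : Idx u d := Sum.inr (Sum.inr c)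

/-- the unary relation symbol with index k -/
def urel (k : Idx u d) : (graphLang (UU u d)).Relations 1 := idxE u d k

section Formulas

variable {α : Type}

def pr (k : Idx u d) (x : α) : (graphLang (UU u d)).Formula α :=
  (urel u d k).formula₁ (Language.Term.var x)

def edg (x y : α) : (graphLang (UU u d)).Formula α :=
  (graphE (UU u d)).formula₂ (Language.Term.var x) (Language.Term.var y)

def eqf (x y : α) : (graphLang (UU u d)).Formula α :=
  Language.Term.equal (Language.Term.var x) (Language.Term.var y)

noncomputable def sameCF : (graphLang (UU u d)).Formula (Fin 2) :=
  BoundedFormula.iSup Finset.univ (fun c : Fin (2*d+1) => pr u d (iC u d c) 0 ⊓ pr u d (iC u d c) 1)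

noncomputable def pstepF : (graphLang (UU u d)).Formula (Fin 2) :=
  BoundedFormula.iSup Finset.univ (fun t : Fin (2*d) =>
    pr u d (iLab u d t.castSucc) 0 ⊓ pr u d (iLab u d t.succ) 1 ⊓ edg u d 0 1 ⊓ sameCF u d)

noncomputable def pathF : ℕ → (graphLang (UU u d)).Formula (Fin 2)
  | 0 => eqf u d 0 1
  | (k+1) => Formula.iExs (fun j : Fin 3 => (![Sum.inl 0, Sum.inl 1, Sum.inr 0] j : Fin 2 ⊕ Fin 1))
      ((pathF k).relabel ![0, 2] ⊓ (pstepF u d).relabel ![2, 1])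

noncomputable def rhoF (i : Fin d) : (graphLang (UU u d)).Formula (Fin 2) :=
  (eqf u d 0 1 ⊓ pr u d (iL u d i) 0) ⊔
  Formula.iExs (fun j : Fin 4 => (![Sum.inl 0, Sum.inl 1, Sum.inr 0, Sum.inr 1] j : Fin 2 ⊕ Fin 2))
    ((pathF u d i.1).relabel ![0,2] ⊓ (pathF u d (d+i.1)).relabel ![1,3] ⊓ edg u d 2 3 ⊓
      ((sameCF u d).relabel ![2,3]).not)

end Formulas

section Semantics

variable {N : Type} [(graphLang (UU u d)).Structure N]

def unP (k : Idx u d) (x : N) : Prop := Structure.RelMap (urel u d k) ![x]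
def EP (x y : N) : Prop := Structure.RelMap (graphE (UU u d)) ![x, y]
def sameCP (x y : N) : Prop := ∃ c, unP u d (iC u d c) x ∧ unP u d (iC u d c) y
def pstepP (x y : N) : Prop := ∃ t : Fin (2*d),
  unP u d (iLab u d t.castSucc) x ∧ unP u d (iLab u d t.succ) y ∧ EP u d x y ∧ sameCP u d x y
def pathP : ℕ → N → N → Prop
  | 0 => fun x y => x = y
  | (k+1) => fun x y => ∃ z, pathP k x z ∧ pstepP u d z y
def rhoP (i : Fin d) (x y : N) : Prop :=
  (x = y ∧ unP u d (iL u d i) x) ∨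
  ∃ x' y', pathP u d i.1 x x' ∧ pathP u d (d+i.1) y y' ∧ EP u d x' y' ∧ ¬ sameCP u d x' y'

variable {α : Type} {v : α → N}

@[simp] lemma realize_pr {k : Idx u d} {x : α} {v' : Fin 0 → N} :
    BoundedFormula.Realize (pr u d k x) v v' ↔ unP u d k (v x) := by
  rw [Subsingleton.elim v' default]
  show (pr u d k x).Realize v ↔ _
  simp [pr, unP, Formula.realize_rel₁]

@[simp] lemma realize_edg {x y : α} {v' : Fin 0 → N} :
    BoundedFormula.Realize (edg u d x y) v v' ↔ EP u d (v x) (v y) := by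
  rw [Subsingleton.elim v' default]
  show (edg u d x y).Realize v ↔ _
  simp [edg, EP, Formula.realize_rel₂]

@[simp] lemma realize_eqf {x y : α} {v' : Fin 0 → N} :
    BoundedFormula.Realize (eqf u d x y) v v' ↔ v x = v y := by
  rw [Subsingleton.elim v' default]
  show (eqf u d x y).Realize v ↔ _
  simp [eqf, Formula.realize_equal]

@[simp] lemma realize_sameCF {v : Fin 2 → N} {v' : Fin 0 → N} :
    BoundedFormula.Realize (sameCF u d) v v' ↔ sameCP u d (v 0) (v 1) := by
  simp [sameCF, BoundedFormula.realize_iSup, sameCP]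

@[simp] lemma realize_pstepF {v : Fin 2 → N} {v' : Fin 0 → N} :
    BoundedFormula.Realize (pstepF u d) v v' ↔ pstepP u d (v 0) (v 1) := by
  simp only [pstepF, BoundedFormula.realize_iSup, BoundedFormula.realize_inf, realize_pr,
    realize_edg, realize_sameCF, Finset.mem_univ, true_and, pstepP]
  tauto

@[simp] lemma realize_pathF {k : ℕ} {v : Fin 2 → N} {v' : Fin 0 → N} :
    BoundedFormula.Realize (pathF u d k) v v' ↔ pathP u d k (v 0) (v 1) := by
  rw [Subsingleton.elim v' default]
  induction k generalizing v with
  | zero =>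
    show (pathF u d 0).Realize v ↔ _
    simp [pathF, pathP, eqf]
  | succ k ih =>
    show (pathF u d (k+1)).Realize v ↔ _
    rw [pathF, Formula.realize_iExs]
    constructor
    · rintro ⟨i, h⟩
      rw [Formula.realize_inf, Formula.realize_relabel, Formula.realize_relabel] at h
      obtain ⟨h1, h2⟩ := h
      have g1 := ih.mp h1
      have g2 := (realize_pstepF u d (v' := default)).mp h2
      simp only [Function.comp_apply, Matrix.cons_val_zero, Matrix.cons_val_one,
        Matrix.head_cons, Sum.elim_inl, Sum.elim_inr, Matrix.cons_val_two, Matrix.tail_cons]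
        at g1 g2
      exact ⟨i 0, g1, g2⟩
    · rintro ⟨z, h1, h2⟩
      refine ⟨fun _ => z, ?_⟩
      rw [Formula.realize_inf, Formula.realize_relabel, Formula.realize_relabel]
      refine ⟨ih.mpr ?_, (realize_pstepF u d (v' := default)).mpr ?_⟩ <;>
        simpa [Function.comp] using (by assumption : _)

@[simp] lemma realize_rhoF {i : Fin d} {v : Fin 2 → N} {v' : Fin 0 → N} :
    BoundedFormula.Realize (rhoF u d i) v v' ↔ rhoP u d i (v 0) (v 1) := by
  rw [Subsingleton.elim v' default]
  show (rhoF u d i).Realize v ↔ _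
  rw [rhoF, Formula.realize_sup, Formula.realize_inf, Formula.realize_iExs]
  rw [show ((eqf u d 0 1).Realize v ↔ v 0 = v 1) from realize_eqf u d,
    show ((pr u d (iL u d i) 0).Realize v ↔ unP u d (iL u d i) (v 0)) from realize_pr u d]
  unfold rhoP
  apply or_congr Iff.rfl
  constructor
  · rintro ⟨w, h⟩
    rw [Formula.realize_inf, Formula.realize_inf, Formula.realize_inf, Formula.realize_not,
      Formula.realize_relabel, Formula.realize_relabel, Formula.realize_relabel] at h
    obtain ⟨⟨⟨h1, h2⟩, h3⟩, h4⟩ := h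
    have g1 := (realize_pathF u d (v' := default)).mp h1
    have g2 := (realize_pathF u d (v' := default)).mp h2
    have g3 := (realize_edg u d (v' := default)).mp h3
    have g4 := fun hc => h4 ((realize_sameCF u d (v' := default)).mpr hc)
    simp only [Function.comp_apply, Matrix.cons_val_zero, Matrix.cons_val_one,
      Matrix.head_cons, Sum.elim_inl, Sum.elim_inr, Matrix.cons_val_two, Matrix.tail_cons,
      Matrix.cons_val_three] at g1 g2 g3 g4
    exact ⟨w 0, w 1, g1, g2, g3, g4⟩
  · rintro ⟨x', y', h1, h2, h3, h4⟩
    refine ⟨![x', y'], ?_⟩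
    rw [Formula.realize_inf, Formula.realize_inf, Formula.realize_inf, Formula.realize_not,
      Formula.realize_relabel, Formula.realize_relabel, Formula.realize_relabel]
    refine ⟨⟨⟨(realize_pathF u d (v' := default)).mpr ?_,
      (realize_pathF u d (v' := default)).mpr ?_⟩,
      (realize_edg u d (v' := default)).mpr ?_⟩,
      fun hc => h4 ?_⟩
    · simpa [Function.comp] using h1
    · simpa [Function.comp] using h2
    · simpa [Function.comp] using h3
    · have := (realize_sameCF u d (v' := default)).mp hc
      simpa [Function.comp] using this

end Semantics
end Stmt12

namespace Stmt12
open FirstOrder Language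

variable (u d : ℕ)

def isoIdx : Fin (2*d+1) := Fin.last (2*d)

section Ax
variable (l : ℕ)

noncomputable def axA1 : (graphLang (UU u d)).Sentence :=
  Formula.iAlls (fun _ : Fin 1 => (Sum.inr 0 : Empty ⊕ Fin 1))
    (BoundedFormula.iSup Finset.univ (fun τ : Fin (2*d+1) =>
      pr u d (iLab u d τ) 0 ⊓ BoundedFormula.iInf (Finset.univ.erase τ)
        (fun σ => (pr u d (iLab u d σ) 0).not)))

noncomputable def axA2 : (graphLang (UU u d)).Sentence :=
  Formula.iExs (fun i : Fin l => (Sum.inr i : Empty ⊕ Fin l))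
    ((BoundedFormula.iInf (Finset.univ.filter fun p : Fin l × Fin l => p.1 ≠ p.2)
        (fun p => (eqf u d p.1 p.2).not)) ⊓
     (BoundedFormula.iInf Finset.univ (fun i : Fin l => pr u d (iLab u d (isoIdx d)) i)) ⊓
     (Formula.iAlls (fun o : Option (Fin l) => (Option.elim o (Sum.inr 0) Sum.inl : Fin l ⊕ Fin 1))
        ((pr u d (iLab u d (isoIdx d)) none) ⟹
          BoundedFormula.iSup Finset.univ (fun i : Fin l => eqf u d none (some i)))))

def axA3 : (graphLang (UU u d)).Sentence := (graphE (UU u d)).symmetric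

noncomputable def axA6 : (graphLang (UU u d)).Sentence :=
  Formula.iAlls (fun j : Fin 5 => (Sum.inr j : Empty ⊕ Fin 5))
    ((BoundedFormula.iInf (Finset.univ.filter fun p : Fin 4 × Fin 4 => p.1 ≠ p.2)
        (fun p => (eqf u d p.1.castSucc p.2.castSucc).not) ⊓
      BoundedFormula.iInf Finset.univ (fun j : Fin 4 =>
        (eqf u d j.castSucc 4).not ⊓ edg u d 4 j.castSucc)).not)

noncomputable def peF (t : Fin (2*d)) : (graphLang (UU u d)).Formula (Fin 2) :=
  pr u d (iLab u d t.castSucc) 0 ⊓ pr u d (iLab u d t.succ) 1 ⊓ edg u d 0 1 ⊓ sameCF u d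

noncomputable def axA5a : (graphLang (UU u d)).Sentence :=
  BoundedFormula.iInf (Finset.univ.filter fun t : Fin (2*d) => t.1 + 1 < 2*d) (fun t =>
    Formula.iAlls (fun _ : Fin 1 => (Sum.inr 0 : Empty ⊕ Fin 1))
      (pr u d (iLab u d t.castSucc) 0 ⟹
        Formula.iExs (fun j : Fin 2 => (![Sum.inl 0, Sum.inr 0] j : Fin 1 ⊕ Fin 1))
          (peF u d t ⊓
            Formula.iAlls (fun j : Fin 3 => (![Sum.inl 0, Sum.inl 1, Sum.inr 0] j : Fin 2 ⊕ Fin 1))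
              ((peF u d t).relabel ![0, 2] ⟹ eqf u d 2 1))))

noncomputable def axA5b : (graphLang (UU u d)).Sentence :=
  BoundedFormula.iInf (Finset.univ.filter fun t : Fin (2*d) => t.1 + 1 < 2*d) (fun t =>
    Formula.iAlls (fun _ : Fin 1 => (Sum.inr 0 : Empty ⊕ Fin 1))
      (pr u d (iLab u d t.succ) 0 ⟹
        Formula.iExs (fun j : Fin 2 => (![Sum.inr 0, Sum.inl 0] j : Fin 1 ⊕ Fin 1))
          (peF u d t ⊓
            Formula.iAlls (fun j : Fin 3 => (![Sum.inl 0, Sum.inl 1, Sum.inr 0] j : Fin 2 ⊕ Fin 1))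
              ((peF u d t).relabel ![2, 1] ⟹ eqf u d 2 0))))

end Ax

section AxSem

variable {N : Type} [(graphLang (UU u d)).Structure N]

lemma f_iSup {α β : Type} (s : Finset β) (f : β → (graphLang (UU u d)).Formula α)
    (v : α → N) :
    Formula.Realize (BoundedFormula.iSup s f) v ↔ ∃ b ∈ s, (f b).Realize v :=
  BoundedFormula.realize_iSup s f v default

lemma f_iInf {α β : Type} (s : Finset β) (f : β → (graphLang (UU u d)).Formula α)
    (v : α → N) :
    Formula.Realize (BoundedFormula.iInf s f) v ↔ ∀ b ∈ s, (f b).Realize v :=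
  BoundedFormula.realize_iInf s f v default

def labP (τ : Fin (2*d+1)) (x : N) : Prop := unP u d (iLab u d τ) x
def isoP (x : N) : Prop := labP u d (isoIdx d) x
def peP (t : Fin (2*d)) (x y : N) : Prop :=
  labP u d t.castSucc x ∧ labP u d t.succ y ∧ EP u d x y ∧ sameCP u d x y

lemma realize_axA1 : (N ⊨ axA1 u d) ↔ ∀ x : N, ∃! τ, labP u d τ x := by
  rw [Sentence.Realize, axA1, Formula.realize_iAlls]
  constructor
  · intro h x
    have := h (fun _ => x)
    obtain ⟨τ, -, hτ⟩ := (f_iSup u d _ _ _).mp this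
    rw [Formula.realize_inf, f_iInf u d] at hτ
    refine ⟨τ, (realize_pr u d).mp hτ.1, fun σ hσ => by_contra fun hne => ?_⟩
    exact Formula.realize_not.mp (hτ.2 σ (Finset.mem_erase.2 ⟨hne, Finset.mem_univ _⟩))
      ((realize_pr u d).mpr hσ)
  · intro h i
    obtain ⟨τ, hτ, huniq⟩ := h (i 0)
    apply (f_iSup u d _ _ _).mpr
    refine ⟨τ, Finset.mem_univ _, ?_⟩
    rw [Formula.realize_inf, f_iInf u d]
    refine ⟨(realize_pr u d).mpr hτ, fun σ hσ => Formula.realize_not.mpr fun hc => ?_⟩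
    exact (Finset.mem_erase.1 hσ).1
      (huniq σ ((realize_pr u d (v := fun _ : Fin 1 => Sum.elim default i (Sum.inr 0))).mp hc))

lemma realize_axA2 {l : ℕ} : (N ⊨ axA2 u d l) ↔ ∃ w : Fin l → N, Function.Injective w ∧
    (∀ i, isoP u d (w i)) ∧ ∀ z : N, isoP u d z → ∃ i, z = w i := by
  rw [Sentence.Realize, axA2, Formula.realize_iExs]
  apply exists_congr; intro w
  rw [Formula.realize_inf, Formula.realize_inf, f_iInf u d, f_iInf u d, Formula.realize_iAlls]
  constructor
  · rintro ⟨⟨h1, h2⟩, h3⟩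
    refine ⟨fun i j hij => by_contra fun hne => ?_, fun i => ?_, fun z hz => ?_⟩
    · exact Formula.realize_not.mp
        (h1 (i, j) (Finset.mem_filter.2 ⟨Finset.mem_univ _, hne⟩)) ((realize_eqf u d).mpr hij)
    · exact (realize_pr u d).mp (h2 i (Finset.mem_univ _))
    · have := h3 (fun _ => z)
      rw [Formula.realize_imp] at this
      have h4 := this ((realize_pr u d).mpr hz)
      obtain ⟨i, -, hi⟩ := (f_iSup u d _ _ _).mp h4
      exact ⟨i, (realize_eqf u d).mp hi⟩
  · rintro ⟨hinj, hiso, hcov⟩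
    refine ⟨⟨fun p hp => Formula.realize_not.mpr fun hc => ?_,
      fun i _ => (realize_pr u d).mpr (hiso i)⟩, fun z => ?_⟩
    · exact (Finset.mem_filter.1 hp).2 (hinj ((realize_eqf u d).mp hc))
    · rw [Formula.realize_imp]
      intro hz
      obtain ⟨i, hi⟩ := hcov _ ((realize_pr u d).mp hz)
      exact (f_iSup u d _ _ _).mpr ⟨i, Finset.mem_univ _, (realize_eqf u d).mpr hi⟩

lemma realize_axA3 : (N ⊨ axA3 u d) ↔ ∀ x y : N, EP u d x y → EP u d y x := by
  rw [axA3, Relations.realize_symmetric]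
  exact ⟨fun h x y => h.symm x y, fun h => ⟨h⟩⟩

lemma realize_axA6 : (N ⊨ axA6 u d) ↔ ∀ (x : N) (w : Fin 4 → N),
    Function.Injective w → (∀ j, w j ≠ x ∧ EP u d x (w j)) → False := by
  rw [Sentence.Realize, axA6, Formula.realize_iAlls]
  constructor
  · intro h x w hinj hw
    have := h (Fin.snoc w x)
    rw [Formula.realize_not, Formula.realize_inf, f_iInf u d, f_iInf u d] at this
    refine this ⟨fun p hp => Formula.realize_not.mpr fun hc => ?_, fun j _ => ?_⟩
    · have := (realize_eqf u d).mp hc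
      simp only [Sum.elim_inr, Fin.snoc_castSucc] at this
      exact (Finset.mem_filter.1 hp).2 (hinj this)
    · rw [Formula.realize_inf]
      refine ⟨Formula.realize_not.mpr fun hc => ?_, (realize_edg u d).mpr ?_⟩
      · have := (realize_eqf u d).mp hc
        simp only [Sum.elim_inr, Fin.snoc_castSucc] at this
        exact (hw j).1 (this.trans (Fin.snoc_last (α := fun _ => N) (p := w) (x := x)))
      · simp only [Sum.elim_inr, Fin.snoc_castSucc]
        exact (congrArg (fun z => EP u d z (w j)) (Fin.snoc_last (α := fun _ => N) (p := w) (x := x))).mpr (hw j).2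
  · intro h vv
    rw [Formula.realize_not, Formula.realize_inf, f_iInf u d, f_iInf u d]
    rintro ⟨h1, h2⟩
    refine h (Sum.elim (default : Empty → N) vv (Sum.inr 4))
      (fun j => Sum.elim (default : Empty → N) vv (Sum.inr j.castSucc)) (fun p q hpq => ?_) (fun j => ?_)
    · by_contra hne
      exact Formula.realize_not.mp
        (h1 (p, q) (Finset.mem_filter.2 ⟨Finset.mem_univ _, hne⟩)) ((realize_eqf u d).mpr hpq)
    · have h3 := Formula.realize_inf.mp (h2 j (Finset.mem_univ _))
      exact ⟨fun hc => Formula.realize_not.mp h3.1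
          ((realize_eqf u d (v := fun a : Fin 5 => Sum.elim (default : Empty → N) vv (Sum.inr a))).mpr hc),
        (realize_edg u d (v := fun a : Fin 5 => Sum.elim (default : Empty → N) vv (Sum.inr a))).mp h3.2⟩

lemma realize_peF {t : Fin (2*d)} {v : Fin 2 → N} {v' : Fin 0 → N} :
    BoundedFormula.Realize (peF u d t) v v' ↔ peP u d t (v 0) (v 1) := by
  rw [Subsingleton.elim v' default]
  show (peF u d t).Realize v ↔ _
  rw [peF, Formula.realize_inf, Formula.realize_inf, Formula.realize_inf]
  unfold peP labP
  rw [show ((pr u d (iLab u d t.castSucc) 0).Realize v ↔ _) from realize_pr u d,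
    show ((pr u d (iLab u d t.succ) 1).Realize v ↔ _) from realize_pr u d,
    show ((edg u d 0 1).Realize v ↔ _) from realize_edg u d,
    show ((sameCF u d).Realize v ↔ _) from realize_sameCF u d]
  tauto

lemma realize_axA5a : (N ⊨ axA5a u d) ↔ ∀ t : Fin (2*d), t.1 + 1 < 2*d →
    ∀ x : N, labP u d t.castSucc x → ∃! y, peP u d t x y := by
  rw [Sentence.Realize, axA5a, f_iInf u d]
  constructor
  · intro h t ht x hx
    have := h t (Finset.mem_filter.2 ⟨Finset.mem_univ _, ht⟩)
    rw [Formula.realize_iAlls] at this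
    have h2 := this (fun _ => x)
    rw [Formula.realize_imp, Formula.realize_iExs] at h2
    have h3 := h2 ((realize_pr u d).mpr hx)
    obtain ⟨w, hw⟩ := h3
    rw [Formula.realize_inf, Formula.realize_iAlls] at hw
    refine ⟨w 0, by simpa using (realize_peF u d (v' := default)).mp hw.1, fun y' hy' => ?_⟩
    have h4 := hw.2 (fun _ => y')
    rw [Formula.realize_imp, Formula.realize_relabel] at h4
    have h5 := h4 (by
      apply (realize_peF u d (v' := default)).mpr
      simpa [Function.comp] using hy')
    have := (realize_eqf u d).mp h5
    simpa using this
  · intro h t ht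
    rw [Finset.mem_filter] at ht
    rw [Formula.realize_iAlls]
    intro xv
    rw [Formula.realize_imp, Formula.realize_iExs]
    intro hx
    obtain ⟨y, hy, huniq⟩ := h t ht.2 (xv 0)
      (by have := (realize_pr u d (x := (0 : Fin 1))).mp hx; exact this)
    refine ⟨fun _ => y, ?_⟩
    rw [Formula.realize_inf, Formula.realize_iAlls]
    constructor
    · apply (realize_peF u d (v' := default)).mpr; simpa using hy
    · intro y'
      rw [Formula.realize_imp, Formula.realize_relabel]
      intro hy'
      apply (realize_eqf u d).mpr
      have := huniq (y' 0) (by simpa [Function.comp] using (realize_peF u d (v' := default)).mp hy')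
      simpa using this

lemma realize_axA5b : (N ⊨ axA5b u d) ↔ ∀ t : Fin (2*d), t.1 + 1 < 2*d →
    ∀ y : N, labP u d t.succ y → ∃! x, peP u d t x y := by
  rw [Sentence.Realize, axA5b, f_iInf u d]
  constructor
  · intro h t ht y hy
    have := h t (Finset.mem_filter.2 ⟨Finset.mem_univ _, ht⟩)
    rw [Formula.realize_iAlls] at this
    have h2 := this (fun _ => y)
    rw [Formula.realize_imp, Formula.realize_iExs] at h2
    have h3 := h2 ((realize_pr u d).mpr hy)
    obtain ⟨w, hw⟩ := h3
    rw [Formula.realize_inf, Formula.realize_iAlls] at hw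
    refine ⟨w 0, by simpa using (realize_peF u d (v' := default)).mp hw.1,
      fun x' hx' => ?_⟩
    have h4 := hw.2 (fun _ => x')
    rw [Formula.realize_imp, Formula.realize_relabel] at h4
    have h5 := h4 (by
      apply (realize_peF u d (v' := default)).mpr
      simpa [Function.comp] using hx')
    have := (realize_eqf u d).mp h5
    simpa using this
  · intro h t ht
    rw [Finset.mem_filter] at ht
    rw [Formula.realize_iAlls]
    intro yv
    rw [Formula.realize_imp, Formula.realize_iExs]
    intro hy
    obtain ⟨x, hx, huniq⟩ := h t ht.2 (yv 0)
      (by have := (realize_pr u d (x := (0 : Fin 1))).mp hy; exact this)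
    refine ⟨fun _ => x, ?_⟩
    rw [Formula.realize_inf, Formula.realize_iAlls]
    constructor
    · apply (realize_peF u d (v' := default)).mpr; simpa using hx
    · intro x'
      rw [Formula.realize_imp, Formula.realize_relabel]
      intro hx'
      apply (realize_eqf u d).mpr
      have := huniq (x' 0) (by simpa [Function.comp] using (realize_peF u d (v' := default)).mp hx')
      simpa using this

end AxSem
end Stmt12

namespace Stmt12
open FirstOrder Language

variable (u d : ℕ)

def varOf {γ : Type} : (pifLang u d).Term γ → γ
  | .var v => v
  | .func f _ => Empty.elim f

/-- Translation of pif-formulas into graph-formulas, relativizing quantifiers to T₀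
and replacing the function-graph relations by the gadget formulas. -/
noncomputable def trf : ∀ {n}, (pifLang u d).BoundedFormula Empty n →
    (graphLang (UU u d)).BoundedFormula Empty n
  | _, .falsum => ⊥
  | _, .equal t₁ t₂ => BoundedFormula.equal (Language.Term.var (varOf u d t₁))
      (Language.Term.var (varOf u d t₂))
  | n, @BoundedFormula.rel _ _ _ l R ts =>
    (match l, R, ts with
      | 1, R, ts => (urel u d (iO u d R)).boundedFormula₁ (Language.Term.var (varOf u d (ts 0)))
      | 2, R, ts => BoundedFormula.relabel (fun k : Fin 2 => varOf u d (ts k)) (rhoF u d R)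
      | 0, R, _ => Empty.elim R
      | (_+3), R, _ => Empty.elim R)
  | _, .imp f g => (trf f).imp (trf g)
  | n, .all f => BoundedFormula.all
      (((urel u d (iLab u d 0)).boundedFormula₁ (Language.Term.var (Sum.inr (Fin.last n)))) ⟹ trf f)

section Rel

variable {N : Type} [(graphLang (UU u d)).Structure N]

def T0P (x : N) : Prop := labP u d 0 x

def Mr : Type := {x : N // T0P u d x}

noncomputable instance pifSt : (pifLang u d).Structure (Mr u d (N := N)) where
  funMap := fun {l} f => Empty.elim f
  RelMap := fun {l} R => match l, R with
    | 1, R => fun v => unP u d (iO u d R) (v 0).val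
    | 2, R => fun v => rhoP u d R (v 0).val (v 1).val
    | 0, R => Empty.elim R
    | (_+3), R => Empty.elim R

lemma term_realize_varOf {X : Type} [(pifLang u d).Structure X] {γ : Type}
    (t : (pifLang u d).Term γ) (w : γ → X) : Language.Term.realize w t = w (varOf u d t) := by
  cases t with
  | var v => rfl
  | func f ts => exact Empty.elim f

lemma val_varOf {n : ℕ} (xs : Fin n → Mr u d (N := N)) (v : Empty ⊕ Fin n) :
    (Sum.elim (fun e : Empty => e.elim) xs v).val =
      Sum.elim (fun e : Empty => e.elim) (fun k => (xs k).val) v := by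
  cases v with
  | inl e => exact e.elim
  | inr k => rfl

lemma realize_trf : ∀ {n} (f : (pifLang u d).BoundedFormula Empty n) (xs : Fin n → Mr u d (N := N)),
    (BoundedFormula.Realize (M := N) (trf u d f) (fun e : Empty => e.elim)
      (fun k => (xs k).val)) ↔
    BoundedFormula.Realize (M := Mr u d (N := N)) f (fun e : Empty => e.elim) xs
  | _, .falsum, xs => Iff.rfl
  | _, .equal t₁ t₂, xs => by
    show (Language.Term.realize (Sum.elim (fun e : Empty => e.elim) (fun k => (xs k).val))
        (Language.Term.var (varOf u d t₁)) =
      Language.Term.realize (Sum.elim (fun e : Empty => e.elim) (fun k => (xs k).val))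
        (Language.Term.var (varOf u d t₂))) ↔
      (Language.Term.realize (Sum.elim (fun e : Empty => e.elim) xs) t₁ =
       Language.Term.realize (Sum.elim (fun e : Empty => e.elim) xs) t₂)
    rw [Language.Term.realize_var, Language.Term.realize_var,
      term_realize_varOf, term_realize_varOf]
    constructor
    · intro h
      exact Subtype.ext (by rw [val_varOf, val_varOf]; exact h)
    · intro h
      rw [← val_varOf u d xs, ← val_varOf u d xs]
      exact congrArg Subtype.val h
  | _, @BoundedFormula.rel _ _ _ 1 R ts, xs => by
    show (BoundedFormula.Realize ((urel u d (iO u d R)).boundedFormula₁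
      (Language.Term.var (varOf u d (ts 0)))) _ _) ↔ _
    rw [BoundedFormula.realize_rel₁, Language.Term.realize_var]
    show unP u d (iO u d R)
        (Sum.elim (fun e : Empty => e.elim) (fun k => (xs k).val) (varOf u d (ts 0))) ↔
      unP u d (iO u d R)
        ((Language.Term.realize (Sum.elim (fun e : Empty => e.elim) xs) (ts 0)).val)
    rw [term_realize_varOf, val_varOf]
  | _, @BoundedFormula.rel _ _ _ 2 R ts, xs => by
    show (BoundedFormula.Realize (BoundedFormula.relabel (fun k : Fin 2 => varOf u d (ts k))
      (rhoF u d R)) _ _) ↔ _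
    rw [BoundedFormula.realize_relabel]
    rw [show (BoundedFormula.Realize (rhoF u d R) _ _ ↔ _) from realize_rhoF u d]
    show rhoP u d R
        (Sum.elim (fun e : Empty => e.elim) (fun k => (xs k).val) (varOf u d (ts 0)))
        (Sum.elim (fun e : Empty => e.elim) (fun k => (xs k).val) (varOf u d (ts 1))) ↔
      rhoP u d R
        ((Language.Term.realize (Sum.elim (fun e : Empty => e.elim) xs) (ts 0)).val)
        ((Language.Term.realize (Sum.elim (fun e : Empty => e.elim) xs) (ts 1)).val)
    rw [term_realize_varOf, term_realize_varOf, val_varOf, val_varOf]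
  | _, @BoundedFormula.rel _ _ _ 0 R ts, xs => Empty.elim R
  | _, @BoundedFormula.rel _ _ _ (_+3) R ts, xs => Empty.elim R
  | _, .imp f g, xs => by
    show ((trf u d f).imp (trf u d g)).Realize _ _ ↔ (f.imp g).Realize _ _
    rw [BoundedFormula.realize_imp, BoundedFormula.realize_imp,
      realize_trf f xs, realize_trf g xs]
  | n, .all f, xs => by
    show (BoundedFormula.Realize (BoundedFormula.all _) _ _) ↔ BoundedFormula.Realize (.all f) _ _
    rw [BoundedFormula.realize_all, BoundedFormula.realize_all]
    constructor
    · intro h ym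
      have h2 := h ym.val
      rw [BoundedFormula.realize_imp, BoundedFormula.realize_rel₁] at h2
      have h3 := h2 (by
        rw [Language.Term.realize_var]
        simpa [Fin.snoc_last, T0P, labP, unP] using ym.2)
      have h4 : (fun k => ((Fin.snoc xs ym : Fin (n+1) → Mr u d (N := N)) k).val)
          = Fin.snoc (fun k => (xs k).val) ym.val := by
        show Subtype.val ∘ Fin.snoc xs ym = _
        exact Fin.comp_snoc _ _ _
      rw [← realize_trf f (Fin.snoc xs ym), h4]
      exact h3
    · intro h y
      rw [BoundedFormula.realize_imp, BoundedFormula.realize_rel₁]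
      intro hy
      have hy' : T0P u d y := by
        rw [Language.Term.realize_var] at hy
        simpa [Fin.snoc_last, T0P, labP, unP] using hy
      have h2 := (realize_trf f (Fin.snoc xs ⟨y, hy'⟩)).mpr (h ⟨y, hy'⟩)
      have h4 : (fun k => ((Fin.snoc xs ⟨y, hy'⟩ : Fin (n+1) → Mr u d (N := N)) k).val)
          = Fin.snoc (fun k => (xs k).val) y := by
        show Subtype.val ∘ Fin.snoc xs ⟨y, hy'⟩ = _
        exact Fin.comp_snoc _ _ _
      rw [h4] at h2
      exact h2

end Rel
end Stmt12

namespace Stmt12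
open FirstOrder Language

variable (u d : ℕ)

noncomputable def psi (l : ℕ) (φ : (pifLang u d).Sentence) : (graphLang (UU u d)).Sentence :=
  axA1 u d ⊓ axA2 u d l ⊓ axA3 u d ⊓ axA5a u d ⊓ axA5b u d ⊓ axA6 u d ⊓ trf u d φ

lemma realize_psi {l : ℕ} {φ : (pifLang u d).Sentence} {N : Type}
    [(graphLang (UU u d)).Structure N] : N ⊨ psi u d l φ ↔
    ((((((N ⊨ axA1 u d) ∧ N ⊨ axA2 u d l) ∧ N ⊨ axA3 u d) ∧ N ⊨ axA5a u d) ∧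
      N ⊨ axA5b u d) ∧ N ⊨ axA6 u d) ∧ N ⊨ trf u d φ := by
  rw [Sentence.Realize, psi, Formula.realize_inf, Formula.realize_inf, Formula.realize_inf,
    Formula.realize_inf, Formula.realize_inf, Formula.realize_inf]
  exact Iff.rfl

lemma symdeg3_of_psi {l : ℕ} {φ : (pifLang u d).Sentence} (N : Type)
    (St : (graphLang (UU u d)).Structure N)
    (h : @Sentence.Realize _ N St (psi u d l φ)) : SymDeg3 St := by
  letI := St
  obtain ⟨⟨⟨⟨⟨⟨h1, h2⟩, h3⟩, h5a⟩, h5b⟩, h6⟩, h7⟩ := (realize_psi u d).mp h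
  constructor
  · intro a b hab
    exact (realize_axA3 u d).mp h3 a b hab
  · intro v
    apply finite_ncard_le_three
    intro w hw hinj
    exact (realize_axA6 u d).mp h6 v w hinj (fun j => ⟨(hw j).1, (hw j).2⟩)

lemma forward {l : ℕ} {φ : (pifLang u d).Sentence} (hd : 0 < d)
    (hφpif : ∀ M (St : (pifLang u d).Structure M),
      @Sentence.Realize _ M St φ → IsPIFStructure St)
    (N : Type) (St : (graphLang (UU u d)).Structure N) (hfin : Finite N)
    (h : @Sentence.Realize _ N St (psi u d l φ)) :
    ∃ n ∈ pifSpectrum φ, Nat.card N = 2 * d * n + l := by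
  classical
  letI := St
  obtain ⟨⟨⟨⟨⟨⟨h1, h2⟩, h3⟩, h5a⟩, h5b⟩, h6⟩, h7⟩ := (realize_psi u d).mp h
  rw [realize_axA1 u d] at h1
  rw [realize_axA2 u d] at h2
  rw [realize_axA5a u d] at h5a
  rw [realize_axA5b u d] at h5b
  -- the pif model
  haveI : Finite (Mr u d (N := N)) := Subtype.finite
  have hφM : @Sentence.Realize _ (Mr u d (N := N)) (pifSt u d) φ := by
    have h7' : BoundedFormula.Realize (M := N) (trf u d φ) (fun e : Empty => e.elim)
        (fun k : Fin 0 => ((fun k' : Fin 0 => k'.elim0 : Fin 0 → Mr u d (N := N)) k).val) := by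
      have h7'' : BoundedFormula.Realize (M := N) (trf u d φ) default default := h7
      convert h7'' using 2 <;> exact Subsingleton.elim _ _
    have := (realize_trf u d φ (fun k' : Fin 0 => k'.elim0)).mp h7'
    have goal : BoundedFormula.Realize (M := Mr u d (N := N)) φ default default := by
      convert this using 2 <;> exact Subsingleton.elim _ _
    exact goal
  set n := Nat.card (Mr u d (N := N)) with hn
  refine ⟨n, ⟨Mr u d (N := N), pifSt u d, inferInstance, rfl, hφpif _ _ hφM, hφM⟩, ?_⟩
  -- counting
  haveI : Fintype N := Fintype.ofFinite N
  set lab : N → Fin (2*d+1) := fun x => (h1 x).choose with hlab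
  have hlabP : ∀ x, labP u d (lab x) x := fun x => (h1 x).choose_spec.1
  have hlabU : ∀ x τ, labP u d τ x → lab x = τ := fun x τ hτ =>
    ((h1 x).choose_spec.2 τ hτ).symm
  have fibcard : ∀ τ, (Finset.univ.filter fun a => lab a = τ).card =
      Nat.card {x : N // labP u d τ x} := by
    intro τ
    rw [← Fintype.card_subtype, Nat.card_eq_fintype_card]
    exact Fintype.card_congr (Equiv.subtypeEquivRight (fun x =>
      ⟨fun hx => hx ▸ hlabP x, fun hx => hlabU x τ hx⟩))
  -- all type fibers have the same cardinality
  have step : ∀ t : Fin (2*d), t.1 + 1 < 2*d →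
      Nat.card {x : N // labP u d t.castSucc x} = Nat.card {x : N // labP u d t.succ x} := by
    intro t ht
    apply card_eq_of_unique_rel (fun x y => peP u d t x.val y.val)
    · rintro ⟨x, hx⟩
      obtain ⟨y, hy, hyu⟩ := h5a t ht x hx
      exact ⟨⟨y, hy.2.1⟩, hy, fun ⟨y', hy'⟩ hp => Subtype.ext (hyu y' hp)⟩
    · rintro ⟨y, hy⟩
      obtain ⟨x, hx, hxu⟩ := h5b t ht y hy
      exact ⟨⟨x, hx.1⟩, hx, fun ⟨x', hx'⟩ hp => Subtype.ext (hxu x' hp)⟩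
  have fib_eq_n : ∀ (k : ℕ) (hk : k < 2*d),
      Nat.card {x : N // labP u d ⟨k, Nat.lt_succ_of_lt hk⟩ x} = n := by
    intro k
    induction k with
    | zero =>
      intro hk
      rw [hn]
      apply Nat.card_congr
      apply Equiv.subtypeEquivRight
      intro x
      have : (⟨0, Nat.lt_succ_of_lt hk⟩ : Fin (2*d+1)) = 0 := by
        apply Fin.ext; simp
      rw [this]
      exact Iff.rfl
    | succ k ih =>
      intro hk
      have hk' : k < 2*d := Nat.lt_of_succ_lt hk
      have hstep := step ⟨k, hk'⟩ hk
      have e1 : (Fin.castSucc ⟨k, hk'⟩ : Fin (2*d+1)) = ⟨k, Nat.lt_succ_of_lt hk'⟩ := rfl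
      have e2 : (Fin.succ ⟨k, hk'⟩ : Fin (2*d+1)) = ⟨k+1, Nat.lt_succ_of_lt hk⟩ := rfl
      rw [e1, e2] at hstep
      rw [← hstep]
      exact ih hk'
  -- iso fiber has cardinality l
  obtain ⟨w, hwinj, hwiso, hwcov⟩ := h2
  have iso_card : Nat.card {x : N // labP u d (isoIdx d) x} = l := by
    rw [show l = Nat.card (Fin l) by simp]
    symm
    apply Nat.card_eq_of_bijective (fun i => (⟨w i, hwiso i⟩ : {x : N // labP u d (isoIdx d) x}))
    constructor
    · intro i j hij
      exact hwinj (congrArg Subtype.val hij)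
    · rintro ⟨z, hz⟩
      obtain ⟨i, hi⟩ := hwcov z hz
      exact ⟨i, Subtype.ext hi.symm⟩
  -- total count
  have htotal : Fintype.card N = ∑ τ : Fin (2*d+1), (Finset.univ.filter fun a => lab a = τ).card := by
    rw [← Finset.card_univ]
    exact Finset.card_eq_sum_card_fiberwise (fun x _ => Finset.mem_univ (lab x))
  rw [Nat.card_eq_fintype_card, htotal]
  have : ∀ τ : Fin (2*d+1), (Finset.univ.filter fun a => lab a = τ).card =
      Nat.card {x : N // labP u d τ x} := fibcard
  calc ∑ τ : Fin (2*d+1), (Finset.univ.filter fun a => lab a = τ).card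
      = ∑ τ : Fin (2*d+1), Nat.card {x : N // labP u d τ x} := by
        exact Finset.sum_congr rfl (fun τ _ => fibcard τ)
    _ = (∑ t : Fin (2*d), Nat.card {x : N // labP u d t.castSucc x}) +
        Nat.card {x : N // labP u d (Fin.last (2*d)) x} := Fin.sum_univ_castSucc _
    _ = (∑ _t : Fin (2*d), n) + l := by
        rw [show (Fin.last (2*d)) = isoIdx d from rfl, iso_card]
        congr 1
        apply Finset.sum_congr rfl
        intro t _
        have : (Fin.castSucc t : Fin (2*d+1)) = ⟨t.1, Nat.lt_succ_of_lt t.2⟩ := rfl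
        rw [this]
        exact fib_eq_n t.1 t.2
    _ = 2 * d * n + l := by
        rw [Finset.sum_const, Finset.card_univ, Fintype.card_fin, smul_eq_mul]

end Stmt12

namespace Stmt12
open FirstOrder Language

section Backward

variable (u d : ℕ) (M : Type) (StM : (pifLang u d).Structure M)

def Rr (i : Fin d) (a b : M) : Prop := StM.RelMap (pifRel u d i) ![a, b]

variable (l : ℕ)

def adj0 (x y : (M × Fin (2*d)) ⊕ Fin l) : Prop :=
  (∃ (a : M) (t : Fin (2*d)) (h : t.1 + 1 < 2*d),
      x = Sum.inl (a, t) ∧ y = Sum.inl (a, ⟨t.1+1, h⟩)) ∨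
  (∃ (i : Fin d) (a b : M), Rr u d M StM i a b ∧ a ≠ b ∧
      x = Sum.inl (a, ⟨i.1, Nat.lt_of_lt_of_le i.2 (by omega)⟩) ∧
      y = Sum.inl (b, ⟨d + i.1, by have := i.2; omega⟩))

def adjS (x y : (M × Fin (2*d)) ⊕ Fin l) : Prop :=
  adj0 u d M StM l x y ∨ adj0 u d M StM l y x

def labOf : ((M × Fin (2*d)) ⊕ Fin l) → Fin (2*d+1)
  | Sum.inl (_, t) => t.castSucc
  | Sum.inr _ => Fin.last (2*d)

def uData (col : M → Fin (2*d+1)) : Idx u d → (((M × Fin (2*d)) ⊕ Fin l) → Prop)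
  | Sum.inl (Sum.inl j) => fun x => match x with
      | Sum.inl (a, t) => t.1 = 0 ∧ StM.RelMap (show (pifLang u d).Relations 1 from j) ![a]
      | Sum.inr _ => False
  | Sum.inl (Sum.inr i) => fun x => match x with
      | Sum.inl (a, t) => t.1 = 0 ∧ Rr u d M StM i a a
      | Sum.inr _ => False
  | Sum.inr (Sum.inl τ) => fun x => labOf d M l x = τ
  | Sum.inr (Sum.inr c) => fun x => match x with
      | Sum.inl (a, _) => col a = c
      | Sum.inr _ => False

noncomputable def gSt (col : M → Fin (2*d+1)) :
    (graphLang (UU u d)).Structure ((M × Fin (2*d)) ⊕ Fin l) where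
  funMap := fun {k} f _ => Empty.elim f
  RelMap := fun {k} => match k with
    | 1 => fun r v => uData u d M StM l col ((idxE u d).symm r) (v 0)
    | 2 => fun _ v => adjS u d M StM l (v 0) (v 1)
    | 0 => fun r _ => Empty.elim r
    | (_+3) => fun r _ => Empty.elim r

section Sem

variable (col : M → Fin (2*d+1))

lemma unP_eq (k : Idx u d) (x : (M × Fin (2*d)) ⊕ Fin l) :
    @unP u d _ (gSt u d M StM l col) k x ↔ uData u d M StM l col k x := by
  show uData u d M StM l col ((idxE u d).symm ((idxE u d) k)) x ↔ _
  rw [Equiv.symm_apply_apply]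

lemma EP_eq (x y : (M × Fin (2*d)) ⊕ Fin l) :
    @EP u d _ (gSt u d M StM l col) x y ↔ adjS u d M StM l x y := Iff.rfl

lemma labP_eq (τ : Fin (2*d+1)) (x : (M × Fin (2*d)) ⊕ Fin l) :
    @labP u d _ (gSt u d M StM l col) τ x ↔ labOf d M l x = τ :=
  unP_eq u d M StM l col (iLab u d τ) x

lemma sameC_eq (x y : (M × Fin (2*d)) ⊕ Fin l) :
    @sameCP u d _ (gSt u d M StM l col) x y ↔
      (∃ (a b : M) (s t : Fin (2*d)), x = Sum.inl (a, s) ∧ y = Sum.inl (b, t) ∧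
        col a = col b) := by
  unfold sameCP
  constructor
  · rintro ⟨c, hc1, hc2⟩
    rw [unP_eq] at hc1 hc2
    match x, y with
    | Sum.inl (a, s), Sum.inl (b, t) =>
      exact ⟨a, b, s, t, rfl, rfl, by
        have h1 : col a = c := hc1
        have h2 : col b = c := hc2
        rw [h1, h2]⟩
    | Sum.inl _, Sum.inr _ => exact absurd hc2 (by intro h; exact h)
    | Sum.inr _, _ => exact absurd hc1 (by intro h; exact h)
  · rintro ⟨a, b, s, t, rfl, rfl, hab⟩
    exact ⟨col b, by rw [unP_eq]; exact hab, by rw [unP_eq]; exact rfl⟩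

end Sem
end Backward
end Stmt12

namespace Stmt12
open FirstOrder Language

section Backward2

variable (u d : ℕ) (M : Type) (StM : (pifLang u d).Structure M) (l : ℕ)
  (col : M → Fin (2*d+1))

/-- properness of the coloring for the cross graph -/
def Proper : Prop := ∀ a b : M, a ≠ b →
  (∃ i : Fin d, Rr u d M StM i a b ∨ Rr u d M StM i b a) → col a ≠ col b

lemma peP_char (hcol : Proper u d M StM col) (t : Fin (2*d)) (ht : t.1 + 1 < 2*d)
    (x y : (M × Fin (2*d)) ⊕ Fin l) :
    @peP u d _ (gSt u d M StM l col) t x y ↔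
      ∃ a : M, x = Sum.inl (a, t) ∧ y = Sum.inl (a, ⟨t.1+1, ht⟩) := by
  constructor
  · rintro ⟨h1, h2, h3, h4⟩
    rw [labP_eq] at h1 h2
    match x, y with
    | Sum.inr j, _ =>
      exfalso
      have hl : (Fin.last (2*d) : Fin (2*d+1)) = t.castSucc := h1
      have := congrArg Fin.val hl
      simp only [Fin.val_last, Fin.coe_castSucc] at this
      have := t.2
      omega
    | Sum.inl (a, s), Sum.inr j =>
      -- y = inr: EP x y is impossible
      rcases h3 with (⟨a', t', h', e1, e2⟩ | ⟨i, a', b', hR, hne, e1, e2⟩) |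
        (⟨a', t', h', e1, e2⟩ | ⟨i, a', b', hR, hne, e1, e2⟩) <;>
        first | (simp at e1; done) | (simp at e2; done)
    | Sum.inl (a, s), Sum.inl (b, s') =>
      have hs : s = t := Fin.castSucc_injective _ h1
      have hs' : s'.1 = t.1 + 1 := by
        have h2' : s'.castSucc = t.succ := h2
        have := congrArg Fin.val h2'
        simpa using this
      have h3' : adjS u d M StM l (Sum.inl (a, s)) (Sum.inl (b, s')) :=
        (EP_eq u d M StM l col _ _).mp h3
      rcases h3' with (⟨a', t', h', e1, e2⟩ | ⟨i, a', b', hR, hne, e1, e2⟩) |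
        (⟨a', t', h', e1, e2⟩ | ⟨i, a', b', hR, hne, e1, e2⟩)
      · -- path x→y : success
        simp only [Sum.inl.injEq, Prod.mk.injEq] at e1 e2
        refine ⟨a, by rw [hs], ?_⟩
        rw [show b = a from (e2.1.trans e1.1.symm)]
        exact congrArg (fun p : Fin (2*d) => (Sum.inl (a, p) : (M × Fin (2*d)) ⊕ Fin l))
          (Fin.ext (by simpa using hs'))
      · -- cross x→y : excluded by color
        exfalso
        simp only [Sum.inl.injEq, Prod.mk.injEq] at e1 e2
        obtain ⟨c1, c2, s1, t1, q1, q2, hcc⟩ := (sameC_eq u d M StM l col _ _).mp h4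
        simp only [Sum.inl.injEq, Prod.mk.injEq] at q1 q2
        refine hcol a' b' hne ⟨i, Or.inl hR⟩ ?_
        rw [← e1.1, ← e2.1, q1.1, q2.1]
        exact hcc
      · -- path y→x : type clash
        exfalso
        simp only [Sum.inl.injEq, Prod.mk.injEq] at e1 e2
        have hv1 : s'.1 = t'.1 := by simpa using congrArg Fin.val e1.2
        have hv2 : s.1 = t'.1 + 1 := by simpa using congrArg Fin.val e2.2
        have hst : s.1 = t.1 := congrArg Fin.val hs
        omega
      · -- cross y→x : type clash
        exfalso
        simp only [Sum.inl.injEq, Prod.mk.injEq] at e1 e2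
        have hv1 : s'.1 = i.1 := by simpa using congrArg Fin.val e1.2
        have hv2 : s.1 = d + i.1 := by simpa using congrArg Fin.val e2.2
        have hst : s.1 = t.1 := congrArg Fin.val hs
        have := i.2
        omega
  · rintro ⟨a, rfl, rfl⟩
    refine ⟨?_, ?_, ?_, ?_⟩
    · rw [labP_eq]; rfl
    · rw [labP_eq]
      show (⟨t.1+1, ht⟩ : Fin (2*d)).castSucc = t.succ
      apply Fin.ext; simp
    · exact Or.inl (Or.inl ⟨a, t, ht, rfl, rfl⟩)
    · exact (sameC_eq u d M StM l col _ _).mpr ⟨a, a, t, ⟨t.1+1, ht⟩, rfl, rfl, rfl⟩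

lemma pstep_char (hcol : Proper u d M StM col) (x y : (M × Fin (2*d)) ⊕ Fin l) :
    @pstepP u d _ (gSt u d M StM l col) x y ↔
      ∃ (a : M) (t : Fin (2*d)) (h : t.1 + 1 < 2*d),
        x = Sum.inl (a, t) ∧ y = Sum.inl (a, ⟨t.1+1, h⟩) := by
  constructor
  · rintro ⟨t, h1, h2, h3, h4⟩
    by_cases ht : t.1 + 1 < 2*d
    · obtain ⟨a, e1, e2⟩ := (peP_char u d M StM l col hcol t ht x y).mp ⟨h1, h2, h3, h4⟩
      exact ⟨a, t, ht, e1, e2⟩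
    · exfalso
      -- t.succ = last, so y is inr or castSucc = last; either way EP fails
      rw [unP_eq] at h2
      have hts : (t.succ : Fin (2*d+1)) = Fin.last (2*d) := by
        apply Fin.ext; simp; omega
      match y with
      | Sum.inr j =>
        rcases h3 with (⟨a', t', h', e1, e2⟩ | ⟨i, a', b', hR, hne, e1, e2⟩) |
          (⟨a', t', h', e1, e2⟩ | ⟨i, a', b', hR, hne, e1, e2⟩) <;>
          first | (simp at e1; done) | (simp at e2; done)
      | Sum.inl (b, s') =>
        have : s'.castSucc = Fin.last (2*d) := by rw [← hts]; exact h2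
        have := congrArg Fin.val this
        simp at this
        have := s'.2
        omega
  · rintro ⟨a, t, h, rfl, rfl⟩
    have hp := (peP_char u d M StM l col hcol t h _ _).mpr ⟨a, rfl, rfl⟩
    exact ⟨t, hp.1, hp.2.1, hp.2.2.1, hp.2.2.2⟩

lemma path_char (hcol : Proper u d M StM col) :
    ∀ (k : ℕ) (hk : k < 2*d) (h0 : 0 < 2*d) (a : M) (z : (M × Fin (2*d)) ⊕ Fin l),
      @pathP u d _ (gSt u d M StM l col) k (Sum.inl (a, ⟨0, h0⟩)) z ↔
        z = Sum.inl (a, ⟨k, hk⟩) := by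
  intro k
  induction k with
  | zero =>
    intro hk h0 a z
    show Sum.inl (a, (⟨0, h0⟩ : Fin (2*d))) = z ↔ _
    constructor
    · intro h; exact h.symm
    · intro h; exact h.symm
  | succ k ih =>
    intro hk h0 a z
    show (∃ m, @pathP u d _ (gSt u d M StM l col) k _ m ∧
      @pstepP u d _ (gSt u d M StM l col) m z) ↔ _
    have hk' : k < 2*d := Nat.lt_of_succ_lt hk
    constructor
    · rintro ⟨m, hm, hstep⟩
      rw [ih hk' h0 a m] at hm
      subst hm
      obtain ⟨a', t', h', e1, e2⟩ := (pstep_char u d M StM l col hcol _ _).mp hstep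
      simp only [Sum.inl.injEq, Prod.mk.injEq] at e1
      obtain ⟨rfl, ht'⟩ := e1
      rw [e2]
      have hv : t'.1 = k := (congrArg Fin.val ht').symm
      exact congrArg (fun s : Fin (2*d) => (Sum.inl (a, s) : (M × Fin (2*d)) ⊕ Fin l))
        (Fin.ext (by simp [hv]))
    · rintro rfl
      refine ⟨Sum.inl (a, ⟨k, hk'⟩), (ih hk' h0 a _).mpr rfl, ?_⟩
      apply (pstep_char u d M StM l col hcol _ _).mpr
      exact ⟨a, ⟨k, hk'⟩, hk, rfl, rfl⟩

end Backward2
end Stmt12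

namespace Stmt12
open FirstOrder Language

section Backward3

variable (u d : ℕ) (M : Type) (StM : (pifLang u d).Structure M) (l : ℕ)
  (col : M → Fin (2*d+1))

lemma rho_char (hcol : Proper u d M StM col) (i : Fin d) (a b : M) (h0 : 0 < 2*d) :
    @rhoP u d _ (gSt u d M StM l col) i (Sum.inl (a, ⟨0, h0⟩)) (Sum.inl (b, ⟨0, h0⟩)) ↔
      Rr u d M StM i a b := by
  have hia : i.1 < 2*d := by have := i.2; omega
  have hib : d + i.1 < 2*d := by have := i.2; omega
  constructor
  · rintro (⟨heq, hL⟩ | ⟨x', y', hp1, hp2, hE, hnc⟩)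
    · simp only [Sum.inl.injEq, Prod.mk.injEq] at heq
      rw [unP_eq] at hL
      rw [← heq.1]
      exact hL.2
    · rw [path_char u d M StM l col hcol i.1 hia h0 a x'] at hp1
      rw [path_char u d M StM l col hcol (d+i.1) hib h0 b y'] at hp2
      subst hp1; subst hp2
      have hE' : adjS u d M StM l (Sum.inl (a, ⟨i.1, hia⟩)) (Sum.inl (b, ⟨d+i.1, hib⟩)) :=
        (EP_eq u d M StM l col _ _).mp hE
      rcases hE' with (⟨a', t', h', e1, e2⟩ | ⟨i', a', b', hR, hne, e1, e2⟩) |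
        (⟨a', t', h', e1, e2⟩ | ⟨i', a', b', hR, hne, e1, e2⟩)
      · -- path within gadget : forces same color, contradiction with hnc
        exfalso
        simp only [Sum.inl.injEq, Prod.mk.injEq] at e1 e2
        refine hnc ((sameC_eq u d M StM l col _ _).mpr
          ⟨a, b, ⟨i.1, hia⟩, ⟨d+i.1, hib⟩, rfl, rfl, ?_⟩)
        rw [show b = a from (e2.1.trans e1.1.symm)]
      · -- genuine cross edge
        simp only [Sum.inl.injEq, Prod.mk.injEq] at e1 e2
        have hii : i' = i := by
          apply Fin.ext
          have := congrArg Fin.val e1.2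
          simpa using this.symm
        rw [e1.1, e2.1, ← hii]
        exact hR
      · exfalso
        simp only [Sum.inl.injEq, Prod.mk.injEq] at e1 e2
        have hv1 : d + i.1 = t'.1 := by simpa using congrArg Fin.val e1.2
        have hv2 : i.1 = t'.1 + 1 := by simpa using congrArg Fin.val e2.2
        have := i.2
        omega
      · exfalso
        simp only [Sum.inl.injEq, Prod.mk.injEq] at e1 e2
        have hv1 : d + i.1 = i'.1 := by simpa using congrArg Fin.val e1.2
        have := i'.2
        omega
  · intro hR
    by_cases hab : a = b
    · left
      refine ⟨by rw [hab], ?_⟩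
      rw [unP_eq]
      exact ⟨rfl, by rw [hab] at hR ⊢; exact hR⟩
    · right
      refine ⟨Sum.inl (a, ⟨i.1, hia⟩), Sum.inl (b, ⟨d+i.1, hib⟩),
        (path_char u d M StM l col hcol i.1 hia h0 a _).mpr rfl,
        (path_char u d M StM l col hcol (d+i.1) hib h0 b _).mpr rfl, ?_, ?_⟩
      · exact Or.inl (Or.inr ⟨i, a, b, hR, hab, rfl, rfl⟩)
      · intro hc
        obtain ⟨c1, c2, s1, t1, q1, q2, hcc⟩ := (sameC_eq u d M StM l col _ _).mp hc
        simp only [Sum.inl.injEq, Prod.mk.injEq] at q1 q2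
        exact hcol a b hab ⟨i, Or.inl hR⟩ (by rw [q1.1, q2.1]; exact hcc)

lemma trf_backward {φ : (pifLang u d).Sentence} (hd : 0 < d) (hcol : Proper u d M StM col)
    (hφ : @Sentence.Realize _ M StM φ) :
    @Sentence.Realize _ _ (gSt u d M StM l col) (trf u d φ) := by
  letI := StM
  letI := gSt u d M StM l col
  have h0 : 0 < 2*d := by omega
  have hT0 : ∀ x : (M × Fin (2*d)) ⊕ Fin l,
      T0P u d x ↔ ∃ a : M, x = Sum.inl (a, ⟨0, h0⟩) := by
    intro x
    unfold T0P
    rw [labP_eq]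
    match x with
    | Sum.inl (a, t) =>
      constructor
      · intro h
        have : t.1 = 0 := by
          have := congrArg Fin.val (show t.castSucc = (0 : Fin (2*d+1)) from h)
          simpa using this
        exact ⟨a, by rw [show t = ⟨0, h0⟩ from Fin.ext this]⟩
      · rintro ⟨a', he⟩
        simp only [Sum.inl.injEq, Prod.mk.injEq] at he
        rw [he.2]
        apply Fin.ext
        simp [labOf]
    | Sum.inr j =>
      constructor
      · intro h
        exfalso
        have := congrArg Fin.val (show (Fin.last (2*d) : Fin (2*d+1)) = (0 : Fin (2*d+1)) from h)
        simp at this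
        omega
      · rintro ⟨a, he⟩
        exact nomatch he
  -- the equivalence between M and the T0 part
  have hbij : Function.Bijective (fun a : M =>
      (⟨Sum.inl (a, ⟨0, h0⟩), (hT0 _).mpr ⟨a, rfl⟩⟩ : Mr u d (N := (M × Fin (2*d)) ⊕ Fin l))) := by
    constructor
    · intro a a' h
      have := congrArg Subtype.val h
      simp only [Sum.inl.injEq, Prod.mk.injEq] at this
      exact this.1
    · rintro ⟨x, hx⟩
      obtain ⟨a, rfl⟩ := (hT0 x).mp hx
      exact ⟨a, rfl⟩
  let e := Equiv.ofBijective _ hbij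
  let g : M ≃[pifLang u d] (Mr u d (N := (M × Fin (2*d)) ⊕ Fin l)) :=
    { toEquiv := e
      map_fun' := fun {n} F x => Empty.elim F
      map_rel' := by
        intro n r x
        match n, r with
        | 1, r =>
          show unP u d (iO u d r) ((e (x 0)).val) ↔ StM.RelMap r x
          rw [unP_eq]
          show ((0:ℕ) = 0 ∧ StM.RelMap r ![x 0]) ↔ _
          rw [show ![x 0] = x from (funext fun k => by
            have : k = 0 := Subsingleton.elim k 0
            rw [this]; rfl)]
          exact ⟨fun h => h.2, fun h => ⟨rfl, h⟩⟩
        | 2, r =>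
          show rhoP u d r ((e (x 0)).val) ((e (x 1)).val) ↔ StM.RelMap r x
          have hthis := rho_char u d M StM l col hcol r (x 0) (x 1) h0
          have hxx : Rr u d M StM r (x 0) (x 1) = Structure.RelMap r x := by
            show StM.RelMap (pifRel u d r) ![x 0, x 1] = _
            exact congrArg _ (funext fun k => by fin_cases k <;> rfl)
          rw [hxx] at hthis
          exact hthis
        | 0, r => exact Empty.elim r
        | (n+3), r => exact Empty.elim r }
  have hMr : @Sentence.Realize _ _ (pifSt u d) φ :=
    (StrongHomClass.realize_sentence g φ).mp hφ
  have h1 := (realize_trf u d φ (fun k : Fin 0 => k.elim0)).mpr (by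
    have : BoundedFormula.Realize (M := Mr u d (N := (M × Fin (2*d)) ⊕ Fin l)) φ
        default default := hMr
    convert this using 2 <;> exact Subsingleton.elim _ _)
  show BoundedFormula.Realize (M := (M × Fin (2*d)) ⊕ Fin l) (trf u d φ) default default
  convert h1 using 2 <;> exact Subsingleton.elim _ _

end Backward3
end Stmt12

namespace Stmt12
open FirstOrder Language

section Backward4

variable (u d : ℕ) (M : Type) (StM : (pifLang u d).Structure M) (l : ℕ)
  (col : M → Fin (2*d+1))

lemma get_coloring [Finite M] (hpif : IsPIFStructure StM) :
    ∃ c : M → Fin (2*d+1), Proper u d M StM c := by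
  classical
  haveI := Fintype.ofFinite M
  have key : ∀ a : M, ¬ ∃ w : Fin (2*d+1) → M, Function.Injective w ∧
      ∀ j, w j ≠ a ∧ ((∃ i : Fin d, Rr u d M StM i a (w j) ∨ Rr u d M StM i (w j) a) ∨
        (∃ i : Fin d, Rr u d M StM i (w j) a ∨ Rr u d M StM i a (w j))) := by
    rintro a ⟨w, hinj, hw⟩
    have spec : ∀ j, ∃ i : Fin d, Rr u d M StM i a (w j) ∨ Rr u d M StM i (w j) a := by
      intro j
      rcases (hw j).2 with ⟨i, h | h⟩ | ⟨i, h | h⟩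
      · exact ⟨i, Or.inl h⟩
      · exact ⟨i, Or.inr h⟩
      · exact ⟨i, Or.inr h⟩
      · exact ⟨i, Or.inl h⟩
    choose F hF using spec
    set G : Fin (2*d+1) → Fin d × Bool :=
      fun j => (F j, if Rr u d M StM (F j) a (w j) then true else false) with hG
    have hcard : Fintype.card (Fin d × Bool) < Fintype.card (Fin (2*d+1)) := by
      simp [Fintype.card_prod]
      omega
    obtain ⟨j, j', hne, hGG⟩ := Fintype.exists_ne_map_eq_of_card_lt G hcard
    apply hne
    apply hinj
    have h1 : F j = F j' := congrArg Prod.fst hGG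
    have h2 := congrArg Prod.snd hGG
    simp only [hG] at h2
    by_cases hb : Rr u d M StM (F j) a (w j)
    · rw [if_pos hb] at h2
      have hb' : Rr u d M StM (F j') a (w j') := by
        by_contra hc'
        rw [if_neg hc'] at h2
        exact Bool.noConfusion h2
      rw [h1] at hb
      exact ((hpif (F j')).1 a (w j) (w j') hb hb')
    · rw [if_neg hb] at h2
      have hb' : ¬ Rr u d M StM (F j') a (w j') := by
        intro hc'
        rw [if_pos hc'] at h2
        exact Bool.noConfusion h2
      have g1 : Rr u d M StM (F j) (w j) a := (hF j).resolve_left hb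
      have g2 : Rr u d M StM (F j') (w j') a := (hF j').resolve_left hb'
      rw [h1] at g1
      exact ((hpif (F j')).2 (w j) (w j') a g1 g2)
  obtain ⟨c, hc⟩ := exists_greedy_coloring (Fintype.card M) M rfl
    (fun a b => ∃ i : Fin d, Rr u d M StM i a b ∨ Rr u d M StM i b a) (2*d+1) (by omega) key
  exact ⟨c, fun a b hne hadj => hc a b hne hadj⟩

lemma psi_backward {φ : (pifLang u d).Sentence} (hd : 0 < d) (hpif : IsPIFStructure StM)
    (hcol : Proper u d M StM col) (hφ : @Sentence.Realize _ M StM φ) :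
    @Sentence.Realize _ _ (gSt u d M StM l col) (psi u d l φ) := by
  letI := gSt u d M StM l col
  rw [realize_psi u d]
  refine ⟨⟨⟨⟨⟨⟨?_, ?_⟩, ?_⟩, ?_⟩, ?_⟩, ?_⟩, ?_⟩
  · -- A1
    rw [realize_axA1 u d]
    intro x
    refine ⟨labOf d M l x, (labP_eq u d M StM l col _ _).mpr rfl, fun σ hσ => ?_⟩
    exact ((labP_eq u d M StM l col _ _).mp hσ).symm
  · -- A2
    rw [realize_axA2 u d]
    refine ⟨fun i => Sum.inr i, fun i j hij => by
        simpa using hij, fun i => ?_, fun z hz => ?_⟩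
    · show labP u d (isoIdx d) (Sum.inr i)
      rw [labP_eq]
      rfl
    · have hz' : labOf d M l z = Fin.last (2*d) :=
        (labP_eq u d M StM l col _ _).mp hz
      match z with
      | Sum.inl (a, t) =>
        exfalso
        have := congrArg Fin.val hz'
        simp [labOf] at this
        have := t.2
        omega
      | Sum.inr j => exact ⟨j, rfl⟩
  · -- A3
    rw [realize_axA3 u d]
    intro x y h
    exact Or.symm h
  · -- A5a
    rw [realize_axA5a u d]
    intro t ht x hx
    have hx' := (labP_eq u d M StM l col _ _).mp hx
    match x with
    | Sum.inr j =>
      exfalso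
      have := congrArg Fin.val hx'
      simp [labOf] at this
      have := t.2
      omega
    | Sum.inl (a, s) =>
      have hs : s = t := Fin.castSucc_injective _ hx'
      subst hs
      refine ⟨Sum.inl (a, ⟨s.1+1, ht⟩),
        (peP_char u d M StM l col hcol s ht _ _).mpr ⟨a, rfl, rfl⟩, fun y' hy' => ?_⟩
      obtain ⟨a', e1, e2⟩ := (peP_char u d M StM l col hcol s ht _ _).mp hy'
      simp only [Sum.inl.injEq, Prod.mk.injEq] at e1
      rw [e2, e1.1]
  · -- A5b
    rw [realize_axA5b u d]
    intro t ht y hy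
    have hy' := (labP_eq u d M StM l col _ _).mp hy
    match y with
    | Sum.inr j =>
      exfalso
      have := congrArg Fin.val hy'
      simp [labOf] at this
      omega
    | Sum.inl (a, s') =>
      have hs' : s' = ⟨t.1+1, ht⟩ := by
        apply Fin.ext
        have := congrArg Fin.val hy'
        simpa [labOf] using this
      subst hs'
      refine ⟨Sum.inl (a, t), (peP_char u d M StM l col hcol t ht _ _).mpr ⟨a, rfl, rfl⟩,
        fun x' hx' => ?_⟩
      obtain ⟨a', e1, e2⟩ := (peP_char u d M StM l col hcol t ht _ _).mp hx'
      simp only [Sum.inl.injEq, Prod.mk.injEq] at e2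
      rw [e1, e2.1]
  · -- A6
    rw [realize_axA6 u d]
    intro x w hinj hw
    match x with
    | Sum.inr j =>
      have h := (hw 0).2
      rcases (EP_eq u d M StM l col _ _).mp h with (⟨a', t', h', e1, e2⟩ |
        ⟨i, a', b', hR, hne, e1, e2⟩) | (⟨a', t', h', e1, e2⟩ | ⟨i, a', b', hR, hne, e1, e2⟩) <;>
        first | (simp at e1; done) | (simp at e2; done)
    | Sum.inl (a, t) =>
      classical
      set s1 : (M × Fin (2*d)) ⊕ Fin l :=
        if h : t.1+1 < 2*d then Sum.inl (a, ⟨t.1+1, h⟩) else Sum.inl (a, t) with hs1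
      set s2 : (M × Fin (2*d)) ⊕ Fin l :=
        if h : 0 < t.1 then Sum.inl (a, ⟨t.1-1, by have := t.2; omega⟩) else Sum.inl (a, t)
        with hs2
      set C : ((M × Fin (2*d)) ⊕ Fin l) → Prop := fun y => ∃ (i : Fin d) (b : M),
        (t.1 = i.1 ∧ Rr u d M StM i a b ∧ a ≠ b ∧
          y = Sum.inl (b, ⟨d+i.1, by have := i.2; omega⟩)) ∨
        (t.1 = d + i.1 ∧ Rr u d M StM i b a ∧ b ≠ a ∧
          y = Sum.inl (b, ⟨i.1, by have := i.2; omega⟩)) with hC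
      have hclass : ∀ y, adjS u d M StM l (Sum.inl (a, t)) y → y = s1 ∨ y = s2 ∨ C y := by
        intro y hy
        rcases hy with (⟨a', t', h', e1, e2⟩ | ⟨i, a', b', hR, hne, e1, e2⟩) |
          (⟨a', t', h', e1, e2⟩ | ⟨i, a', b', hR, hne, e1, e2⟩)
        · left
          simp only [Sum.inl.injEq, Prod.mk.injEq] at e1
          obtain ⟨rfl, rfl⟩ := e1
          rw [e2, hs1, dif_pos h']
        · right; right
          simp only [Sum.inl.injEq, Prod.mk.injEq] at e1
          rw [hC]
          refine ⟨i, b', Or.inl ⟨?_, ?_, ?_, ?_⟩⟩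
          · have := congrArg Fin.val e1.2; simpa using this
          · rw [e1.1]; exact hR
          · rw [e1.1]; exact hne
          · exact e2
        · right; left
          simp only [Sum.inl.injEq, Prod.mk.injEq] at e2
          have hpos : 0 < t.1 := by
            have := congrArg Fin.val e2.2; simp at this; omega
          rw [e1, hs2, dif_pos hpos]
          have hv : t'.1 = t.1 - 1 := by
            have := congrArg Fin.val e2.2; simp at this; omega
          rw [e2.1]
          exact congrArg (fun p : Fin (2*d) => (Sum.inl (a', p) : (M × Fin (2*d)) ⊕ Fin l))
            (Fin.ext hv)
        · right; right
          simp only [Sum.inl.injEq, Prod.mk.injEq] at e2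
          rw [hC]
          refine ⟨i, a', Or.inr ⟨?_, ?_, ?_, ?_⟩⟩
          · have := congrArg Fin.val e2.2; simpa using this
          · rw [e2.1]; exact hR
          · rw [e2.1]; exact hne
          · exact e1
      have hCC : ∀ y z, C y → C z → y = z := by
        rintro y z ⟨i1, b1, hy⟩ ⟨i2, b2, hz⟩
        rcases hy with ⟨ht1, hR1, hne1, rfl⟩ | ⟨ht1, hR1, hne1, rfl⟩ <;>
          rcases hz with ⟨ht2, hR2, hne2, rfl⟩ | ⟨ht2, hR2, hne2, rfl⟩
        · have hii : i1 = i2 := Fin.ext (by omega)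
          subst hii
          have hbb : b1 = b2 := (hpif i1).1 a b1 b2 hR1 hR2
          subst hbb; rfl
        · exfalso; have := i1.2; have := i2.2; omega
        · exfalso; have := i1.2; have := i2.2; omega
        · have hii : i1 = i2 := Fin.ext (by omega)
          subst hii
          have hbb : b1 = b2 := (hpif i1).2 b1 b2 a hR1 hR2
          subst hbb; rfl
      set G : Fin 4 → Fin 3 := fun j =>
        if w j = s1 then 0 else if w j = s2 then 1 else 2 with hG
      obtain ⟨j, j', hjne, hGG⟩ := Fintype.exists_ne_map_eq_of_card_lt G (by simp)
      have hcj := hclass (w j) ((EP_eq u d M StM l col _ _).mp (hw j).2)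
      have hcj' := hclass (w j') ((EP_eq u d M StM l col _ _).mp (hw j').2)
      apply hjne
      apply hinj
      simp only [hG] at hGG
      by_cases h1 : w j = s1 <;> by_cases h1' : w j' = s1
      · rw [h1, h1']
      · exfalso
        rw [if_pos h1, if_neg h1'] at hGG
        split_ifs at hGG <;> exact absurd hGG (by decide)
      · exfalso
        rw [if_neg h1, if_pos h1'] at hGG
        split_ifs at hGG <;> exact absurd hGG (by decide)
      · rw [if_neg h1, if_neg h1'] at hGG
        by_cases h2 : w j = s2 <;> by_cases h2' : w j' = s2
        · rw [h2, h2']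
        · exfalso
          rw [if_pos h2, if_neg h2'] at hGG
          exact absurd hGG (by decide)
        · exfalso
          rw [if_neg h2, if_pos h2'] at hGG
          exact absurd hGG (by decide)
        · have c1 : C (w j) := (hcj.resolve_left h1).resolve_left h2
          have c2 : C (w j') := (hcj'.resolve_left h1').resolve_left h2'
          exact hCC _ _ c1 c2
  · -- A7
    exact trf_backward u d M StM l col hd hcol hφ

lemma backward_main {φ : (pifLang u d).Sentence} (hd : 0 < d) (hpif : IsPIFStructure StM)
    [Finite M] (hφ : @Sentence.Realize _ M StM φ) :
    ∃ (N : Type) (St : (graphLang (UU u d)).Structure N), Finite N ∧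
      Nat.card N = 2 * d * (Nat.card M) + l ∧
      @Sentence.Realize _ N St (psi u d l φ) := by
  obtain ⟨c, hc⟩ := get_coloring u d M StM hpif
  refine ⟨(M × Fin (2*d)) ⊕ Fin l, gSt u d M StM l c, inferInstance, ?_,
    psi_backward u d M StM l c hd hpif hc hφ⟩
  rw [Nat.card_sum, Nat.card_prod]
  simp [Nat.card_eq_fintype_card]
  ring

end Backward4
end Stmt12

namespace Stmt12
open FirstOrder Language

section DegZero

variable (u : ℕ)

noncomputable def allIsoS : (graphLang (UU u 0)).Sentence :=
  Formula.iAlls (fun _ : Fin 1 => (Sum.inr 0 : Empty ⊕ Fin 1))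
    (pr u 0 (iLab u 0 (isoIdx 0)) (0 : Fin 1))

noncomputable def noEdgeS : (graphLang (UU u 0)).Sentence :=
  Formula.iAlls (fun j : Fin 2 => (Sum.inr j : Empty ⊕ Fin 2))
    (edg u 0 (0 : Fin 2) (1 : Fin 2)).not

lemma realize_allIsoS {N : Type} [(graphLang (UU u 0)).Structure N] :
    N ⊨ allIsoS u ↔ ∀ x : N, isoP u 0 x := by
  rw [Sentence.Realize, allIsoS, Formula.realize_iAlls]
  constructor
  · intro h x
    exact (realize_pr u 0).mp (h (fun _ => x))
  · intro h i
    exact (realize_pr u 0).mpr (h (i 0))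

lemma realize_noEdgeS {N : Type} [(graphLang (UU u 0)).Structure N] :
    N ⊨ noEdgeS u ↔ ∀ x y : N, ¬ EP u 0 x y := by
  rw [Sentence.Realize, noEdgeS, Formula.realize_iAlls]
  constructor
  · intro h x y
    have := h ![x, y]
    rw [Formula.realize_not] at this
    intro hc
    exact this ((realize_edg u 0).mpr (by simpa using hc))
  · intro h i
    rw [Formula.realize_not]
    intro hc
    exact h (i 0) (i 1) ((realize_edg u 0).mp hc)

noncomputable def thetaS (l : ℕ) : (graphLang (UU u 0)).Sentence :=
  allIsoS u ⊓ axA2 u 0 l ⊓ noEdgeS u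

lemma realize_thetaS {l : ℕ} {N : Type} [(graphLang (UU u 0)).Structure N] :
    N ⊨ thetaS u l ↔ ((N ⊨ allIsoS u) ∧ N ⊨ axA2 u 0 l) ∧ N ⊨ noEdgeS u := by
  rw [Sentence.Realize, thetaS, Formula.realize_inf, Formula.realize_inf]
  exact Iff.rfl

/-- structure on Fin l with all predicates true and no edges -/
noncomputable def trivSt (l : ℕ) : (graphLang (UU u 0)).Structure (Fin l) where
  funMap := fun {k} f _ => Empty.elim f
  RelMap := fun {k} => match k with
    | 1 => fun _ _ => True
    | 2 => fun _ _ => False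
    | 0 => fun r _ => Empty.elim r
    | (_+3) => fun r _ => Empty.elim r

lemma symdeg3_of_theta {l : ℕ} (N : Type) (St : (graphLang (UU u 0)).Structure N)
    (h : @Sentence.Realize _ N St (thetaS u l)) : SymDeg3 St := by
  letI := St
  obtain ⟨⟨h1, h2⟩, h3⟩ := (realize_thetaS u).mp h
  rw [realize_noEdgeS u] at h3
  constructor
  · intro a b hab
    exact absurd hab (h3 a b)
  · intro v
    have he : {w : N | w ≠ v ∧ Structure.RelMap (graphE (UU u 0)) ![v, w]} = ∅ := by
      ext w
      simp only [Set.mem_setOf_eq, Set.mem_empty_iff_false, iff_false, not_and]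
      intro _
      exact h3 v w
    rw [he]
    simp

lemma theta_spectrum {l : ℕ} (N : Type) (St : (graphLang (UU u 0)).Structure N)
    (h : @Sentence.Realize _ N St (thetaS u l)) : Nat.card N = l := by
  letI := St
  obtain ⟨⟨h1, h2⟩, h3⟩ := (realize_thetaS u).mp h
  rw [realize_allIsoS u] at h1
  rw [realize_axA2 u 0] at h2
  obtain ⟨w, hwinj, _, hwcov⟩ := h2
  rw [show l = Nat.card (Fin l) by simp]
  symm
  apply Nat.card_eq_of_bijective w
  refine ⟨hwinj, fun z => ?_⟩
  obtain ⟨i, hi⟩ := hwcov z (h1 z)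
  exact ⟨i, hi.symm⟩

lemma theta_realized (l : ℕ) : @Sentence.Realize _ (Fin l) (trivSt u l) (thetaS u l) := by
  letI := trivSt u l
  rw [realize_thetaS u]
  refine ⟨⟨?_, ?_⟩, ?_⟩
  · rw [realize_allIsoS u]
    intro x
    show Structure.RelMap (urel u 0 (iLab u 0 (isoIdx 0))) ![x]
    exact trivial
  · rw [realize_axA2 u 0]
    refine ⟨fun i => i, fun i j h => h, fun i => trivial, fun z _ => ⟨z, rfl⟩⟩
  · rw [realize_noEdgeS u]
    intro x y hc
    exact hc

end DegZero
end Stmt12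


open Language Stmt12 in
/-- if S ∈ PIFSpec_d then {2dn + l : n ∈ S} ∈ BDSpec_3. -/
theorem stmt_12 (d : ℕ) (S : Set ℕ) (hS : PIFSpec d S) (l : ℕ) :
    BDSpec3 {m : ℕ | ∃ n ∈ S, m = 2 * d * n + l} := by
  classical
  obtain ⟨u, φ, hφpif, hSspec⟩ := hS
  rcases Nat.eq_zero_or_pos d with hd | hd
  · subst hd
    by_cases hne : S.Nonempty
    · refine ⟨UU u 0, thetaS u l, fun N St h => symdeg3_of_theta u N St h, ?_⟩
      ext m
      simp only [Set.mem_setOf_eq, graphSpectrum]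
      constructor
      · rintro ⟨n, hn, rfl⟩
        exact ⟨Fin l, trivSt u l, inferInstance, by simp, theta_realized u l⟩
      · rintro ⟨N, St, hfin, hcard, hreal⟩
        obtain ⟨n0, hn0⟩ := hne
        refine ⟨n0, hn0, ?_⟩
        rw [← hcard, theta_spectrum u N St hreal]
        omega
    · rw [Set.not_nonempty_iff_eq_empty] at hne
      refine ⟨0, ⊥, fun N St h => absurd h (by
        intro hc
        exact (BoundedFormula.realize_bot (M := N)).mp hc), ?_⟩
      ext m
      simp only [Set.mem_setOf_eq, graphSpectrum, hne]
      constructor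
      · rintro ⟨n, hn, rfl⟩
        exact absurd hn (Set.notMem_empty n)
      · rintro ⟨N, St, hfin, hcard, hreal⟩
        exact absurd hreal (by
          intro hc
          exact (BoundedFormula.realize_bot (M := N)).mp hc)
  · refine ⟨UU u d, psi u d l φ, fun N St h => symdeg3_of_psi u d N St h, ?_⟩
    ext m
    simp only [Set.mem_setOf_eq, graphSpectrum]
    constructor
    · rintro ⟨n, hn, rfl⟩
      rw [hSspec] at hn
      obtain ⟨M, StM, hfinM, hcardM, hpifM, hφM⟩ := hn
      obtain ⟨N, St, hfinN, hcardN, hpsiN⟩ :=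
        backward_main u d M StM l (hpif := hpifM) hd hφM
      exact ⟨N, St, hfinN, by rw [hcardN, hcardM], hpsiN⟩
    · rintro ⟨N, St, hfinN, hcardN, hpsiN⟩
      obtain ⟨n, hnspec, hcard⟩ := forward u d hd hφpif N St hfinN hpsiN
      exact ⟨n, by rw [hSspec]; exact hnspec, by rw [← hcardN, hcard]⟩
end
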